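/- arXiv:1011.3180 — 6 statements merged into one kernel-verified Lean document; each statement's English description precedes it below -/
import Mathlib

section
/- If a rectangle can be partitioned into finitely many squares (not necessarily of equal size), then the ratio of the lengths of its two perpendicular sides is a rational number. -/
open Set

/-- The smallest element of the finite set `T` strictly greater than `u`
(or `u` itself if there is none). -/
noncomputable def dehnNxt (T : Finset ℝ) (u : ℝ) : ℝ :=
  if h : (T.filter (fun t => u < t)).Nonempty then (T.filter (fun t => u < t)).min' h else u

lemma dehnNxt_mem {T : Finset ℝ} {u : ℝ} (h : (T.filter (fun t => u < t)).Nonempty) :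
    dehnNxt T u ∈ T := by
  rw [dehnNxt, dif_pos h]
  exact (Finset.mem_filter.1 ((T.filter (fun t => u < t)).min'_mem h)).1

lemma lt_dehnNxt {T : Finset ℝ} {u : ℝ} (h : (T.filter (fun t => u < t)).Nonempty) :
    u < dehnNxt T u := by
  rw [dehnNxt, dif_pos h]
  exact (Finset.mem_filter.1 ((T.filter (fun t => u < t)).min'_mem h)).2

lemma dehnNxt_le {T : Finset ℝ} {u t : ℝ} (ht : t ∈ T) (hut : u < t) : dehnNxt T u ≤ t := by
  have h : (T.filter (fun t => u < t)).Nonempty := ⟨t, Finset.mem_filter.2 ⟨ht, hut⟩⟩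
  rw [dehnNxt, dif_pos h]
  exact Finset.min'_le _ t (Finset.mem_filter.2 ⟨ht, hut⟩)

/-- Telescoping sum over successive grid points. -/
lemma dehn_telescope (T : Finset ℝ) (g : ℝ → ℝ) (d : ℝ) (hd : d ∈ T) :
    ∀ k (c : ℝ), (T.filter (fun u => c ≤ u ∧ u < d)).card = k → c ∈ T → c ≤ d →
    ∑ u ∈ T.filter (fun u => c ≤ u ∧ u < d), (g (dehnNxt T u) - g u) = g d - g c := by
  intro k
  induction k using Nat.strong_induction_on with
  | _ k ih =>
    intro c hcard hc hcd
    rcases eq_or_lt_of_le hcd with rfl | hlt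
    · rw [Finset.filter_false_of_mem, Finset.sum_empty]
      · ring
      · rintro u hu ⟨h1, h2⟩; exact absurd (lt_of_le_of_lt h1 h2) (lt_irrefl c)
    · have hne : (T.filter (fun t => c < t)).Nonempty := ⟨d, Finset.mem_filter.2 ⟨hd, hlt⟩⟩
      set c' := dehnNxt T c with hc'
      have hcc' : c < c' := lt_dehnNxt hne
      have hc'T : c' ∈ T := dehnNxt_mem hne
      have hc'd : c' ≤ d := dehnNxt_le hd hlt
      have hsplit : T.filter (fun u => c ≤ u ∧ u < d)
          = insert c (T.filter (fun u => c' ≤ u ∧ u < d)) := by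
        ext u
        simp only [Finset.mem_filter, Finset.mem_insert]
        constructor
        · rintro ⟨huT, h1, h2⟩
          rcases eq_or_lt_of_le h1 with rfl | h1'
          · exact Or.inl rfl
          · exact Or.inr ⟨huT, dehnNxt_le huT h1', h2⟩
        · rintro (rfl | ⟨huT, h1, h2⟩)
          · exact ⟨hc, le_refl u, hlt⟩
          · exact ⟨huT, le_trans hcc'.le h1, h2⟩
      have hnotmem : c ∉ T.filter (fun u => c' ≤ u ∧ u < d) := by
        simp only [Finset.mem_filter, not_and]
        intro _ h1; exact absurd (lt_of_lt_of_le hcc' h1) (lt_irrefl c)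
      have hcard' : (T.filter (fun u => c' ≤ u ∧ u < d)).card < k := by
        rw [← hcard, hsplit, Finset.card_insert_of_notMem hnotmem]
        omega
      rw [hsplit, Finset.sum_insert hnotmem, ih _ hcard' c' rfl hc'T hc'd]
      have : dehnNxt T c = c' := rfl
      rw [this]; ring

/-- A `ℚ`-linear functional separating two `ℚ`-independent reals. -/
lemma dehn_exists_functional (a b : ℝ) (hab : a ≠ b)
    (h : ∀ q : ℚ, a / b ≠ q) (hb : b ≠ 0) :
    ∃ f : ℝ →ₗ[ℚ] ℝ, f a = 1 ∧ f b = -1 := by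
  have hli : LinearIndependent ℚ ![a, b] := by
    rw [LinearIndependent.pair_iff]
    intro s t hst
    by_cases hs0 : s = 0
    · subst hs0
      simp only [zero_smul, zero_add] at hst
      rcases (by simpa [Rat.smul_def] using hst : t = 0 ∨ b = 0) with h1 | h1
      · exact ⟨rfl, h1⟩
      · exact absurd h1 hb
    · exfalso
      have : a = (-(t/s) : ℚ) • b := by
        have hs : (s:ℝ) ≠ 0 := by exact_mod_cast hs0
        rw [Rat.smul_def, Rat.smul_def] at hst
        rw [Rat.smul_def]
        push_cast
        rw [eq_comm, neg_mul, div_mul_eq_mul_div, neg_eq_iff_eq_neg, div_eq_iff hs]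
        nlinarith [hst]
      apply h (-(t/s))
      rw [this, Rat.smul_def, mul_div_assoc, div_self hb, mul_one]
  have hli' : LinearIndepOn ℚ id ({a, b} : Set ℝ) := by
    have := (linearIndepOn_id_range_iff hli.injective).mpr hli
    have hr : Set.range ![a, b] = {a, b} := by
      ext z; simp [Matrix.range_cons, Fin.exists_fin_two, or_comm]
    rwa [hr] at this
  classical
  set B := Module.Basis.extend hli' with hB
  have hmem : ∀ z ∈ ({a,b} : Set ℝ), z ∈ hli'.extend (subset_univ _) :=
    fun z hz => hli'.subset_extend _ hz
  set g : hli'.extend (subset_univ _) → ℝ :=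
    fun i => if (i:ℝ) = a then 1 else if (i:ℝ) = b then -1 else 0 with hg
  refine ⟨B.constr ℚ g, ?_, ?_⟩
  · have h1 : a = B ⟨a, hmem a (by simp)⟩ :=
      (Module.Basis.extend_apply_self hli' ⟨a, hmem a (by simp)⟩).symm
    rw [show (B.constr ℚ g) a = (B.constr ℚ g) (B ⟨a, hmem a (by simp)⟩) from by rw [← h1],
      Module.Basis.constr_basis]
    simp [hg]
  · have h1 : b = B ⟨b, hmem b (by simp)⟩ :=
      (Module.Basis.extend_apply_self hli' ⟨b, hmem b (by simp)⟩).symm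
    rw [show (B.constr ℚ g) b = (B.constr ℚ g) (B ⟨b, hmem b (by simp)⟩) from by rw [← h1],
      Module.Basis.constr_basis]
    simp [hg, hab.symm]

/-- **Dehn's theorem.** If a rectangle `[0,a] × [0,b]` can be partitioned into
finitely many axis-parallel squares (not necessarily equal), then the ratio
`a / b` of its perpendicular sides is rational. -/
theorem dehn_rectangle_squares (a b : ℝ) (ha : 0 < a) (hb : 0 < b)
    (n : ℕ) (x y s : Fin n → ℝ) (hs : ∀ i, 0 < s i)
    (hcover : (⋃ i, Icc (x i) (x i + s i) ×ˢ Icc (y i) (y i + s i))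
      = Icc (0 : ℝ) a ×ˢ Icc (0 : ℝ) b)
    (hdisj : ∀ i j, i ≠ j →
      Disjoint (Ioo (x i) (x i + s i) ×ˢ Ioo (y i) (y i + s i))
               (Ioo (x j) (x j + s j) ×ˢ Ioo (y j) (y j + s j))) :
    ∃ q : ℚ, a / b = q := by
  classical
  by_contra hirr
  push_neg at hirr
  have hab : a ≠ b := by
    intro h
    exact hirr 1 (by rw [h, div_self hb.ne']; norm_num)
  obtain ⟨f, hfa, hfb⟩ := dehn_exists_functional a b hab hirr hb.ne'
  -- all squares lie inside the rectangle
  have hcorner : ∀ i, 0 ≤ x i ∧ x i + s i ≤ a ∧ 0 ≤ y i ∧ y i + s i ≤ b := by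
    intro i
    have h1 : ((x i, y i) : ℝ × ℝ) ∈ Icc (0:ℝ) a ×ˢ Icc (0:ℝ) b := by
      rw [← hcover]
      refine mem_iUnion.2 ⟨i, ?_⟩
      simp only [Set.mem_prod, Set.mem_Icc]
      refine ⟨⟨le_refl _, ?_⟩, le_refl _, ?_⟩ <;> linarith [hs i]
    have h2 : ((x i + s i, y i + s i) : ℝ × ℝ) ∈ Icc (0:ℝ) a ×ˢ Icc (0:ℝ) b := by
      rw [← hcover]
      refine mem_iUnion.2 ⟨i, ?_⟩
      simp only [Set.mem_prod, Set.mem_Icc]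
      refine ⟨⟨?_, le_refl _⟩, ?_, le_refl _⟩ <;> linarith [hs i]
    simp only [Set.mem_prod, Set.mem_Icc] at h1 h2
    exact ⟨h1.1.1, h2.1.2, h1.2.1, h2.2.2⟩
  -- the grids of all x- and y-coordinates
  set Tx : Finset ℝ :=
    (Finset.univ.image x ∪ Finset.univ.image (fun i => x i + s i)) ∪ {0, a} with hTxdef
  set Ty : Finset ℝ :=
    (Finset.univ.image y ∪ Finset.univ.image (fun i => y i + s i)) ∪ {0, b} with hTydef
  have hxT : ∀ i, x i ∈ Tx := by intro i; simp [hTxdef]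
  have hxsT : ∀ i, x i + s i ∈ Tx := by
    intro i; simp only [hTxdef, Finset.mem_union]
    exact Or.inl (Or.inr (Finset.mem_image.2 ⟨i, Finset.mem_univ i, rfl⟩))
  have hyT : ∀ i, y i ∈ Ty := by intro i; simp [hTydef]
  have hysT : ∀ i, y i + s i ∈ Ty := by
    intro i; simp only [hTydef, Finset.mem_union]
    exact Or.inl (Or.inr (Finset.mem_image.2 ⟨i, Finset.mem_univ i, rfl⟩))
  have h0Tx : (0:ℝ) ∈ Tx := by simp [hTxdef]
  have haTx : a ∈ Tx := by simp [hTxdef]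
  have h0Ty : (0:ℝ) ∈ Ty := by simp [hTydef]
  have hbTy : b ∈ Ty := by simp [hTydef]
  have hfilx : ∀ u : ℝ, u < a → (Tx.filter (fun t => u < t)).Nonempty :=
    fun u hu => ⟨a, Finset.mem_filter.2 ⟨haTx, hu⟩⟩
  have hfily : ∀ v : ℝ, v < b → (Ty.filter (fun t => v < t)).Nonempty :=
    fun v hv => ⟨b, Finset.mem_filter.2 ⟨hbTy, hv⟩⟩
  -- the containment property of a cell in a square
  set P : Fin n → ℝ → ℝ → Prop := fun i u v =>
    x i ≤ u ∧ dehnNxt Tx u ≤ x i + s i ∧ y i ≤ v ∧ dehnNxt Ty v ≤ y i + s i with hPdef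
  -- each grid cell is contained in some square
  have hex : ∀ u v, u ∈ Tx → 0 ≤ u → u < a → v ∈ Ty → 0 ≤ v → v < b → ∃ i, P i u v := by
    intro u v huT hu0 hua hvT hv0 hvb
    have h1 := lt_dehnNxt (hfilx u hua)
    have h2 : dehnNxt Tx u ≤ a := dehnNxt_le haTx hua
    have h3 := lt_dehnNxt (hfily v hvb)
    have h4 : dehnNxt Ty v ≤ b := dehnNxt_le hbTy hvb
    have hm : (((u + dehnNxt Tx u)/2, (v + dehnNxt Ty v)/2) : ℝ × ℝ)
        ∈ Icc (0:ℝ) a ×ˢ Icc (0:ℝ) b := by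
      simp only [Set.mem_prod, Set.mem_Icc]
      refine ⟨⟨?_, ?_⟩, ?_, ?_⟩ <;> linarith
    rw [← hcover] at hm
    obtain ⟨i, hi⟩ := mem_iUnion.1 hm
    simp only [Set.mem_prod, Set.mem_Icc] at hi
    obtain ⟨⟨hi1, hi2⟩, hi3, hi4⟩ := hi
    refine ⟨i, ?_, ?_, ?_, ?_⟩
    · by_contra hcon
      push_neg at hcon
      have := dehnNxt_le (hxT i) hcon
      linarith
    · exact dehnNxt_le (hxsT i) (by linarith)
    · by_contra hcon
      push_neg at hcon
      have := dehnNxt_le (hyT i) hcon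
      linarith
    · exact dehnNxt_le (hysT i) (by linarith)
  -- ... and that square is unique
  have huniq : ∀ u v, u < a → v < b → ∀ i j, P i u v → P j u v → i = j := by
    intro u v hua hvb i j hi hj
    by_contra hij
    have h1 := lt_dehnNxt (hfilx u hua)
    have h3 := lt_dehnNxt (hfily v hvb)
    obtain ⟨hi1, hi2, hi3, hi4⟩ := hi
    obtain ⟨hj1, hj2, hj3, hj4⟩ := hj
    have hm1 : (((u + dehnNxt Tx u)/2, (v + dehnNxt Ty v)/2) : ℝ × ℝ)
        ∈ Ioo (x i) (x i + s i) ×ˢ Ioo (y i) (y i + s i) := by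
      simp only [Set.mem_prod, Set.mem_Ioo]
      refine ⟨⟨?_, ?_⟩, ?_, ?_⟩ <;> linarith
    have hm2 : (((u + dehnNxt Tx u)/2, (v + dehnNxt Ty v)/2) : ℝ × ℝ)
        ∈ Ioo (x j) (x j + s j) ×ˢ Ioo (y j) (y j + s j) := by
      simp only [Set.mem_prod, Set.mem_Ioo]
      refine ⟨⟨?_, ?_⟩, ?_, ?_⟩ <;> linarith
    exact Set.disjoint_left.1 (hdisj i j hij) hm1 hm2
  have hn : Nonempty (Fin n) := by
    have h0 : (((0:ℝ), (0:ℝ)) : ℝ × ℝ) ∈ Icc (0:ℝ) a ×ˢ Icc (0:ℝ) b := by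
      simp only [Set.mem_prod, Set.mem_Icc]
      exact ⟨⟨le_refl _, ha.le⟩, le_refl _, hb.le⟩
    rw [← hcover] at h0
    obtain ⟨i, -⟩ := mem_iUnion.1 h0
    exact ⟨i⟩
  -- the square containing a given cell
  set ι : ℝ → ℝ → Fin n :=
    fun u v => if h : ∃ i, P i u v then h.choose else Classical.arbitrary _ with hιdef
  have hιspec : ∀ u v, (∃ i, P i u v) → P (ι u v) u v := by
    intro u v h
    simp only [hιdef, dif_pos h]
    exact h.choose_spec
  -- fibers of ι are products of grid-filters
  have hfiber : ∀ i : Fin n,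
      ((Tx.filter (fun u => 0 ≤ u ∧ u < a)) ×ˢ (Ty.filter (fun v => 0 ≤ v ∧ v < b))).filter
          (fun p => ι p.1 p.2 = i)
        = (Tx.filter (fun u => x i ≤ u ∧ u < x i + s i))
            ×ˢ (Ty.filter (fun v => y i ≤ v ∧ v < y i + s i)) := by
    intro i
    ext p
    simp only [Finset.mem_filter, Finset.mem_product]
    constructor
    · rintro ⟨⟨⟨hu1, hu2, hu3⟩, hv1, hv2, hv3⟩, hιp⟩
      have hexp := hex p.1 p.2 hu1 hu2 hu3 hv1 hv2 hv3
      have hPi := hιspec p.1 p.2 hexp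
      rw [hιp] at hPi
      obtain ⟨h1, h2, h3, h4⟩ := hPi
      have h5 := lt_dehnNxt (hfilx p.1 hu3)
      have h6 := lt_dehnNxt (hfily p.2 hv3)
      exact ⟨⟨hu1, h1, by linarith⟩, hv1, h3, by linarith⟩
    · rintro ⟨⟨hu1, hu2, hu3⟩, hv1, hv2, hv3⟩
      obtain ⟨hc1, hc2, hc3, hc4⟩ := hcorner i
      have hu0 : (0:ℝ) ≤ p.1 := le_trans hc1 hu2
      have hua : p.1 < a := lt_of_lt_of_le hu3 hc2
      have hv0 : (0:ℝ) ≤ p.2 := le_trans hc3 hv2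
      have hvb : p.2 < b := lt_of_lt_of_le hv3 hc4
      have hPi : P i p.1 p.2 :=
        ⟨hu2, dehnNxt_le (hxsT i) hu3, hv2, dehnNxt_le (hysT i) hv3⟩
      exact ⟨⟨⟨hu1, hu0, hua⟩, hv1, hv0, hvb⟩,
        huniq p.1 p.2 hua hvb _ i (hιspec p.1 p.2 ⟨i, hPi⟩) hPi⟩
  -- the double sum, computed two ways
  have key1 : ∑ p ∈ (Tx.filter (fun u => 0 ≤ u ∧ u < a))
        ×ˢ (Ty.filter (fun v => 0 ≤ v ∧ v < b)),
        (f (dehnNxt Tx p.1) - f p.1) * (f (dehnNxt Ty p.2) - f p.2)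
      = (f a - f 0) * (f b - f 0) := by
    rw [Finset.sum_product]
    calc ∑ u ∈ Tx.filter (fun u => 0 ≤ u ∧ u < a),
          ∑ v ∈ Ty.filter (fun v => 0 ≤ v ∧ v < b),
            (f (dehnNxt Tx u) - f u) * (f (dehnNxt Ty v) - f v)
        = ∑ u ∈ Tx.filter (fun u => 0 ≤ u ∧ u < a),
            (f (dehnNxt Tx u) - f u) *
              ∑ v ∈ Ty.filter (fun v => 0 ≤ v ∧ v < b), (f (dehnNxt Ty v) - f v) := by
          refine Finset.sum_congr rfl fun u _ => ?_
          rw [Finset.mul_sum]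
      _ = (∑ u ∈ Tx.filter (fun u => 0 ≤ u ∧ u < a), (f (dehnNxt Tx u) - f u)) *
            (∑ v ∈ Ty.filter (fun v => 0 ≤ v ∧ v < b), (f (dehnNxt Ty v) - f v)) := by
          rw [Finset.sum_mul]
      _ = (f a - f 0) * (f b - f 0) := by
          rw [dehn_telescope Tx (fun t => f t) a haTx _ 0 rfl h0Tx ha.le,
            dehn_telescope Ty (fun t => f t) b hbTy _ 0 rfl h0Ty hb.le]
  have key2 : ∑ p ∈ (Tx.filter (fun u => 0 ≤ u ∧ u < a))
        ×ˢ (Ty.filter (fun v => 0 ≤ v ∧ v < b)),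
        (f (dehnNxt Tx p.1) - f p.1) * (f (dehnNxt Ty p.2) - f p.2)
      = ∑ i : Fin n, f (s i) * f (s i) := by
    rw [← Finset.sum_fiberwise_of_maps_to
      (g := fun p : ℝ × ℝ => ι p.1 p.2) (t := Finset.univ) (fun p _ => Finset.mem_univ _)]
    refine Finset.sum_congr rfl fun i _ => ?_
    rw [hfiber i, Finset.sum_product]
    have hxi : f (x i + s i) - f (x i) = f (s i) := by
      rw [map_add]; ring
    have hyi : f (y i + s i) - f (y i) = f (s i) := by
      rw [map_add]; ring
    calc ∑ u ∈ Tx.filter (fun u => x i ≤ u ∧ u < x i + s i),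
          ∑ v ∈ Ty.filter (fun v => y i ≤ v ∧ v < y i + s i),
            (f (dehnNxt Tx u) - f u) * (f (dehnNxt Ty v) - f v)
        = ∑ u ∈ Tx.filter (fun u => x i ≤ u ∧ u < x i + s i),
            (f (dehnNxt Tx u) - f u) *
              ∑ v ∈ Ty.filter (fun v => y i ≤ v ∧ v < y i + s i),
                (f (dehnNxt Ty v) - f v) := by
          refine Finset.sum_congr rfl fun u _ => ?_
          rw [Finset.mul_sum]
      _ = (∑ u ∈ Tx.filter (fun u => x i ≤ u ∧ u < x i + s i), (f (dehnNxt Tx u) - f u)) *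
            (∑ v ∈ Ty.filter (fun v => y i ≤ v ∧ v < y i + s i), (f (dehnNxt Ty v) - f v)) := by
          rw [Finset.sum_mul]
      _ = f (s i) * f (s i) := by
          rw [dehn_telescope Tx (fun t => f t) (x i + s i) (hxsT i) _ (x i) rfl (hxT i)
              (by linarith [hs i]),
            dehn_telescope Ty (fun t => f t) (y i + s i) (hysT i) _ (y i) rfl (hyT i)
              (by linarith [hs i]), hxi, hyi]
  have hsum0 : (0:ℝ) ≤ ∑ i : Fin n, f (s i) * f (s i) :=
    Finset.sum_nonneg fun i _ => mul_self_nonneg _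
  rw [key1] at key2
  rw [map_zero, hfa, hfb] at key2
  nlinarith [key2, hsum0]
end

section
/- If a rectangle is partitioned into finitely many smaller rectangles, then each side of every smaller rectangle is parallel to a side of the large rectangle. -/
set_option maxHeartbeats 1600000000


open Set

/-- A possibly rotated closed rectangle of width `w`, height `h`, rotated by
angle `θ` and translated by `v`. -/
noncomputable def rotRect (v : ℝ × ℝ) (θ w h : ℝ) : Set (ℝ × ℝ) :=
  (fun p : ℝ × ℝ =>
    (v.1 + Real.cos θ * p.1 - Real.sin θ * p.2,
     v.2 + Real.sin θ * p.1 + Real.cos θ * p.2)) '' (Icc 0 w ×ˢ Icc 0 h)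

/-- The corresponding open rectangle (the interior). -/
noncomputable def rotRectInt (v : ℝ × ℝ) (θ w h : ℝ) : Set (ℝ × ℝ) :=
  (fun p : ℝ × ℝ =>
    (v.1 + Real.cos θ * p.1 - Real.sin θ * p.2,
     v.2 + Real.sin θ * p.1 + Real.cos θ * p.2)) '' (Ioo 0 w ×ˢ Ioo 0 h)

lemma mem_rotRect {v : ℝ × ℝ} {θ w h : ℝ} {z : ℝ × ℝ} :
    z ∈ rotRect v θ w h ↔
      ((z.1 - v.1) * Real.cos θ + (z.2 - v.2) * Real.sin θ) ∈ Icc 0 w ∧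
      (-(z.1 - v.1) * Real.sin θ + (z.2 - v.2) * Real.cos θ) ∈ Icc 0 h := by
  have pyth := Real.sin_sq_add_cos_sq θ
  constructor
  · rintro ⟨⟨p1, p2⟩, ⟨hp1, hp2⟩, rfl⟩
    simp only [mem_Icc] at *
    constructor
    · constructor <;> nlinarith [hp1.1, hp1.2, hp2.1, hp2.2]
    · constructor <;> nlinarith [hp1.1, hp1.2, hp2.1, hp2.2]
  · rintro ⟨h1, h2⟩
    refine ⟨((z.1 - v.1) * Real.cos θ + (z.2 - v.2) * Real.sin θ,
      -(z.1 - v.1) * Real.sin θ + (z.2 - v.2) * Real.cos θ), ⟨h1, h2⟩, ?_⟩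
    have e1 : v.1 + Real.cos θ * ((z.1 - v.1) * Real.cos θ + (z.2 - v.2) * Real.sin θ)
        - Real.sin θ * (-(z.1 - v.1) * Real.sin θ + (z.2 - v.2) * Real.cos θ) = z.1 := by
      linear_combination (z.1 - v.1) * pyth
    have e2 : v.2 + Real.sin θ * ((z.1 - v.1) * Real.cos θ + (z.2 - v.2) * Real.sin θ)
        + Real.cos θ * (-(z.1 - v.1) * Real.sin θ + (z.2 - v.2) * Real.cos θ) = z.2 := by
      linear_combination (z.2 - v.2) * pyth
    simp only [e1, e2]

lemma mem_rotRectInt {v : ℝ × ℝ} {θ w h : ℝ} {z : ℝ × ℝ} :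
    z ∈ rotRectInt v θ w h ↔
      ((z.1 - v.1) * Real.cos θ + (z.2 - v.2) * Real.sin θ) ∈ Ioo 0 w ∧
      (-(z.1 - v.1) * Real.sin θ + (z.2 - v.2) * Real.cos θ) ∈ Ioo 0 h := by
  have pyth := Real.sin_sq_add_cos_sq θ
  constructor
  · rintro ⟨⟨p1, p2⟩, ⟨hp1, hp2⟩, rfl⟩
    simp only [mem_Ioo] at *
    constructor
    · constructor <;> nlinarith [hp1.1, hp1.2, hp2.1, hp2.2]
    · constructor <;> nlinarith [hp1.1, hp1.2, hp2.1, hp2.2]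
  · rintro ⟨h1, h2⟩
    refine ⟨((z.1 - v.1) * Real.cos θ + (z.2 - v.2) * Real.sin θ,
      -(z.1 - v.1) * Real.sin θ + (z.2 - v.2) * Real.cos θ), ⟨h1, h2⟩, ?_⟩
    have e1 : v.1 + Real.cos θ * ((z.1 - v.1) * Real.cos θ + (z.2 - v.2) * Real.sin θ)
        - Real.sin θ * (-(z.1 - v.1) * Real.sin θ + (z.2 - v.2) * Real.cos θ) = z.1 := by
      linear_combination (z.1 - v.1) * pyth
    have e2 : v.2 + Real.sin θ * ((z.1 - v.1) * Real.cos θ + (z.2 - v.2) * Real.sin θ)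
        + Real.cos θ * (-(z.1 - v.1) * Real.sin θ + (z.2 - v.2) * Real.cos θ) = z.2 := by
      linear_combination (z.2 - v.2) * pyth
    simp only [e1, e2]

lemma isOpen_rotRectInt (v : ℝ × ℝ) (θ w h : ℝ) : IsOpen (rotRectInt v θ w h) := by
  have : rotRectInt v θ w h =
      (fun z : ℝ × ℝ => (z.1 - v.1) * Real.cos θ + (z.2 - v.2) * Real.sin θ) ⁻¹' (Ioo 0 w) ∩
      (fun z : ℝ × ℝ => -(z.1 - v.1) * Real.sin θ + (z.2 - v.2) * Real.cos θ) ⁻¹' (Ioo 0 h) := by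
    ext z; rw [mem_rotRectInt]; rfl
  rw [this]
  exact (isOpen_Ioo.preimage (by fun_prop)).inter (isOpen_Ioo.preimage (by fun_prop))

lemma rotRect_subset_closure {v : ℝ × ℝ} {θ w h : ℝ} (hw : 0 < w) (hh : 0 < h) :
    rotRect v θ w h ⊆ closure (rotRectInt v θ w h) := by
  have hcl : closure (Ioo (0:ℝ) w ×ˢ Ioo (0:ℝ) h) = Icc (0:ℝ) w ×ˢ Icc (0:ℝ) h := by
    rw [closure_prod_eq, closure_Ioo hw.ne, closure_Ioo hh.ne]
  have hcont : Continuous (fun p : ℝ × ℝ =>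
      (v.1 + Real.cos θ * p.1 - Real.sin θ * p.2,
       v.2 + Real.sin θ * p.1 + Real.cos θ * p.2)) := by fun_prop
  calc rotRect v θ w h = _ '' closure (Ioo (0:ℝ) w ×ˢ Ioo (0:ℝ) h) := by rw [hcl]; rfl
    _ ⊆ closure (rotRectInt v θ w h) := image_closure_subset_closure_image hcont

lemma rotRect_rot90 (v : ℝ × ℝ) (θ w h : ℝ) :
    rotRect v θ w h =
      rotRect (v.1 + w * Real.cos θ, v.2 + w * Real.sin θ) (θ + Real.pi/2) h w := by
  have pyth := Real.sin_sq_add_cos_sq θ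
  ext z
  rw [mem_rotRect, mem_rotRect]
  simp only [Real.cos_add_pi_div_two, Real.sin_add_pi_div_two, mem_Icc]
  constructor
  · rintro ⟨⟨a1, a2⟩, b1, b2⟩
    refine ⟨⟨by nlinarith, by nlinarith⟩, by nlinarith, by nlinarith⟩
  · rintro ⟨⟨a1, a2⟩, b1, b2⟩
    refine ⟨⟨by nlinarith, by nlinarith⟩, by nlinarith, by nlinarith⟩

lemma rotRectInt_rot90 (v : ℝ × ℝ) (θ w h : ℝ) :
    rotRectInt v θ w h =
      rotRectInt (v.1 + w * Real.cos θ, v.2 + w * Real.sin θ) (θ + Real.pi/2) h w := by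
  have pyth := Real.sin_sq_add_cos_sq θ
  ext z
  rw [mem_rotRectInt, mem_rotRectInt]
  simp only [Real.cos_add_pi_div_two, Real.sin_add_pi_div_two, mem_Ioo]
  constructor
  · rintro ⟨⟨a1, a2⟩, b1, b2⟩
    refine ⟨⟨by nlinarith, by nlinarith⟩, by nlinarith, by nlinarith⟩
  · rintro ⟨⟨a1, a2⟩, b1, b2⟩
    refine ⟨⟨by nlinarith, by nlinarith⟩, by nlinarith, by nlinarith⟩

/-- Normalization: a tilted rectangle can be re-parametrized so that the
angle has positive sine and cosine. -/
lemma rotRect_normalize {v : ℝ × ℝ} {θ w h : ℝ} (hw : 0 < w) (hh : 0 < h)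
    (hs : Real.sin θ ≠ 0) (hc : Real.cos θ ≠ 0) :
    ∃ (p : ℝ × ℝ) (α w' h' : ℝ), 0 < w' ∧ 0 < h' ∧
      0 < Real.sin α ∧ 0 < Real.cos α ∧
      rotRect v θ w h = rotRect p α w' h' ∧
      rotRectInt v θ w h = rotRectInt p α w' h' := by
  rcases hs.lt_or_gt with hs' | hs' <;> rcases hc.lt_or_gt with hc' | hc'
  · -- sin θ < 0, cos θ < 0 : rotate twice
    refine ⟨_, θ + Real.pi/2 + Real.pi/2, w, h, hw, hh, ?_, ?_,
      (rotRect_rot90 v θ w h).trans (rotRect_rot90 _ _ h w),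
      (rotRectInt_rot90 v θ w h).trans (rotRectInt_rot90 _ _ h w)⟩
    · rw [Real.sin_add_pi_div_two, Real.cos_add_pi_div_two]; linarith
    · rw [Real.cos_add_pi_div_two, Real.sin_add_pi_div_two]; linarith
  · -- sin θ < 0, cos θ > 0 : rotate once
    refine ⟨_, θ + Real.pi/2, h, w, hh, hw, ?_, ?_,
      rotRect_rot90 v θ w h, rotRectInt_rot90 v θ w h⟩
    · rw [Real.sin_add_pi_div_two]; linarith
    · rw [Real.cos_add_pi_div_two]; linarith
  · -- sin θ > 0, cos θ < 0 : rotate three times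
    refine ⟨_, θ + Real.pi/2 + Real.pi/2 + Real.pi/2, h, w, hh, hw, ?_, ?_,
      ((rotRect_rot90 v θ w h).trans (rotRect_rot90 _ _ h w)).trans (rotRect_rot90 _ _ w h),
      ((rotRectInt_rot90 v θ w h).trans (rotRectInt_rot90 _ _ h w)).trans
        (rotRectInt_rot90 _ _ w h)⟩
    · rw [Real.sin_add_pi_div_two, Real.cos_add_pi_div_two, Real.sin_add_pi_div_two]; linarith
    · rw [Real.cos_add_pi_div_two, Real.sin_add_pi_div_two, Real.cos_add_pi_div_two]; linarith
  · exact ⟨v, θ, w, h, hw, hh, hs', hc', rfl, rfl⟩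

/-- One-coordinate slack lemma. -/
lemma slack_lemma {s0 wQ cs : ℝ} (hwQ : 0 < wQ) (h0 : 0 ≤ s0) (h1 : s0 ≤ wQ)
    (hcs : |cs| ≤ 1) (hlo : s0 = 0 → 0 ≤ cs) (hhi : s0 = wQ → cs ≤ 0) :
    ∃ t1 > 0, ∀ t : ℝ, 0 < t → t ≤ t1 → 0 ≤ s0 + t * cs ∧ s0 + t * cs ≤ wQ := by
  have hcs1 : -1 ≤ cs := (abs_le.mp hcs).1
  have hcs2 : cs ≤ 1 := (abs_le.mp hcs).2
  rcases lt_trichotomy cs 0 with hc | hc | hc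
  · have hs0 : 0 < s0 := by
      rcases h0.lt_or_eq with h | h
      · exact h
      · exact absurd (hlo h.symm) (not_le.mpr hc)
    exact ⟨s0, hs0, fun t ht ht1 => ⟨by nlinarith, by nlinarith⟩⟩
  · exact ⟨1, one_pos, fun t ht ht1 => by rw [hc]; constructor <;> linarith⟩
  · have hs0 : s0 < wQ := by
      rcases h1.lt_or_eq with h | h
      · exact h
      · exact absurd (hhi h) (not_le.mpr hc)
    exact ⟨wQ - s0, by linarith, fun t ht ht1 => ⟨by nlinarith, by nlinarith⟩⟩

lemma one_sub_cos_le {x : ℝ} (hx : 0 ≤ x) (hx2 : x ≤ 2) : 1 - Real.cos x ≤ x^2/2 := by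
  have h1 : Real.cos x = 1 - 2 * Real.sin (x/2)^2 := by
    have := Real.cos_two_mul (x/2)
    have h2 : 2 * (x/2) = x := by ring
    rw [h2] at this
    nlinarith [Real.sin_sq_add_cos_sq (x/2)]
  have h3 : Real.sin (x/2) ≤ x/2 := Real.sin_le (by linarith)
  have h4 : 0 ≤ Real.sin (x/2) := Real.sin_nonneg_of_nonneg_of_le_pi (by linarith)
    (by nlinarith [Real.pi_gt_three])
  nlinarith

lemma limit_nonneg {s0 : ℝ}
    (H : ∀ ζ : ℝ, 0 < ζ → ∃ e B : ℝ, 0 < e ∧ e ≤ ζ ∧ -1 ≤ B ∧ B ≤ 1 ∧ 0 ≤ s0 + e * B) :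
    0 ≤ s0 := by
  refine le_of_forall_pos_le_add ?_
  intro ζ hζ
  obtain ⟨e, B, he, heζ, hB1, hB2, hm⟩ := H ζ hζ
  nlinarith

lemma limit_le {s0 wQ : ℝ}
    (H : ∀ ζ : ℝ, 0 < ζ → ∃ e B : ℝ, 0 < e ∧ e ≤ ζ ∧ -1 ≤ B ∧ B ≤ 1 ∧ s0 + e * B ≤ wQ) :
    s0 ≤ wQ := by
  refine le_of_forall_pos_le_add ?_
  intro ζ hζ
  obtain ⟨e, B, he, heζ, hB1, hB2, hm⟩ := H ζ hζ
  nlinarith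

lemma limit_sign {c s : ℝ} (hc1 : -1 ≤ c) (hc2 : c ≤ 1) (hs1 : -1 ≤ s) (hs2 : s ≤ 1)
    (H : ∀ ζ : ℝ, 0 < ζ → ∃ η : ℝ, 0 < η ∧ 2 * η ≤ ζ ∧ 1 - Real.cos η ≤ η ∧
      Real.sin η ≤ η ∧ 0 ≤ Real.sin η ∧ Real.cos η ≤ 1 ∧
      0 ≤ c * Real.cos η + s * Real.sin η) :
    0 ≤ c := by
  refine le_of_forall_pos_le_add ?_
  intro ζ hζ
  obtain ⟨η, hη, hηζ, hcosb, hsinb, hsin0, hcos1, hm⟩ := H ζ hζ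
  nlinarith [mul_nonneg (by linarith : (0:ℝ) ≤ 1 + c) (by linarith : 0 ≤ 1 - Real.cos η),
    mul_nonneg (by linarith : (0:ℝ) ≤ 1 - s) hsin0]

/-- If an axis-parallel rectangle `[0,a] × [0,b]` is partitioned into finitely
many (possibly rotated) rectangles with pairwise disjoint interiors, then all
the smaller rectangles have sides parallel to the sides of the big one, i.e.
each rotation angle satisfies `sin θᵢ = 0` or `cos θᵢ = 0`. -/
theorem small_rectangles_parallel (a b : ℝ) (ha : 0 < a) (hb : 0 < b)
    (n : ℕ) (v : Fin n → ℝ × ℝ) (θ w h : Fin n → ℝ)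
    (hw : ∀ i, 0 < w i) (hh : ∀ i, 0 < h i)
    (hcover : (⋃ i, rotRect (v i) (θ i) (w i) (h i)) = Icc (0:ℝ) a ×ˢ Icc (0:ℝ) b)
    (hdisj : ∀ i j, i ≠ j →
      Disjoint (rotRectInt (v i) (θ i) (w i) (h i))
               (rotRectInt (v j) (θ j) (w j) (h j))) :
    ∀ i, Real.sin (θ i) = 0 ∨ Real.cos (θ i) = 0 := by
  classical
  intro i
  by_contra hcon
  push_neg at hcon
  obtain ⟨hsi, hci⟩ := hcon
  set S : Finset (Fin n) :=
    Finset.univ.filter (fun j => Real.sin (θ j) ≠ 0 ∧ Real.cos (θ j) ≠ 0) with hSdef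
  have hiS : i ∈ S := by simp [hSdef, hsi, hci]
  have hsub : ∀ j, rotRect (v j) (θ j) (w j) (h j) ⊆ Icc (0:ℝ) a ×ˢ Icc (0:ℝ) b := by
    intro j
    rw [← hcover]
    exact subset_iUnion (fun j => rotRect (v j) (θ j) (w j) (h j)) j
  set m : Fin n → ℝ := fun j => sInf (Prod.snd '' rotRect (v j) (θ j) (w j) (h j)) with hmdef
  have hbdd : ∀ j, BddBelow (Prod.snd '' rotRect (v j) (θ j) (w j) (h j)) := by
    intro j
    refine ⟨0, ?_⟩
    rintro y ⟨z, hz, rfl⟩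
    exact (hsub j hz).2.1
  have hmle : ∀ j z, z ∈ rotRect (v j) (θ j) (w j) (h j) → m j ≤ z.2 :=
    fun j z hz => csInf_le (hbdd j) ⟨z, hz, rfl⟩
  obtain ⟨j0, hj0S, hmin⟩ := S.exists_min_image m ⟨i, hiS⟩
  obtain ⟨hsj0, hcj0⟩ : Real.sin (θ j0) ≠ 0 ∧ Real.cos (θ j0) ≠ 0 := by
    simpa [hSdef] using hj0S
  obtain ⟨p, α, w0, h0, hw0, hh0, hsα, hcα, hR, hRint⟩ :=
    rotRect_normalize (hw j0) (hh j0) hsj0 hcj0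
  have pythα := Real.sin_sq_add_cos_sq α
  have hpR : p ∈ rotRect p α w0 h0 := by
    rw [mem_rotRect]
    have hA : (p.1 - p.1) * Real.cos α + (p.2 - p.2) * Real.sin α = 0 := by ring
    have hB : -(p.1 - p.1) * Real.sin α + (p.2 - p.2) * Real.cos α = 0 := by ring
    rw [hA, hB]
    simp only [mem_Icc]
    exact ⟨⟨le_rfl, hw0.le⟩, le_rfl, hh0.le⟩
  have hmj0 : m j0 = p.2 := by
    have hL : IsLeast (Prod.snd '' rotRect (v j0) (θ j0) (w j0) (h j0)) p.2 := by
      constructor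
      · exact ⟨p, by rw [hR]; exact hpR, rfl⟩
      · rintro y ⟨z, hz, rfl⟩
        rw [hR, mem_rotRect] at hz
        simp only [mem_Icc] at hz
        obtain ⟨⟨c1a, c1b⟩, c2a, c2b⟩ := hz
        nlinarith only [mul_nonneg c1a hsα.le, mul_nonneg c2a hcα.le, pythα]
    exact hL.csInf_eq
  have hpbig : p ∈ Icc (0:ℝ) a ×ˢ Icc (0:ℝ) b := hsub j0 (by rw [hR]; exact hpR)
  obtain ⟨⟨hp1a, hp1b⟩, hp2a, hp2b⟩ := hpbig
  have hvert : (p.1 + w0 * Real.cos α, p.2 + w0 * Real.sin α) ∈ rotRect p α w0 h0 := by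
    rw [mem_rotRect]
    have hA : (p.1 + w0 * Real.cos α - p.1) * Real.cos α
        + (p.2 + w0 * Real.sin α - p.2) * Real.sin α = w0 := by
      linear_combination w0 * pythα
    have hB : -(p.1 + w0 * Real.cos α - p.1) * Real.sin α
        + (p.2 + w0 * Real.sin α - p.2) * Real.cos α = 0 := by ring
    rw [hA, hB]
    simp only [mem_Icc]
    exact ⟨⟨hw0.le, le_rfl⟩, le_rfl, hh0.le⟩
  have hvbig := hsub j0 (by rw [hR]; exact hvert)
  have hkey1 : p.1 + w0 * Real.cos α ≤ a := hvbig.1.2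
  have hkey2 : p.2 + w0 * Real.sin α ≤ b := hvbig.2.2
  -- the approach sequences
  obtain ⟨Mη, hMηdef⟩ : ∃ r : ℝ, r = min 1 (Real.sin α / Real.cos α) := ⟨_, rfl⟩
  obtain ⟨Mε, hMεdef⟩ : ∃ r : ℝ, r = min (w0 * Real.cos α) (w0 * Real.sin α) := ⟨_, rfl⟩
  have hMη : 0 < Mη := by rw [hMηdef]; exact lt_min one_pos (div_pos hsα hcα)
  have hMη1 : Mη ≤ 1 := by rw [hMηdef]; exact min_le_left _ _
  have hMη2 : Mη ≤ Real.sin α / Real.cos α := by rw [hMηdef]; exact min_le_right _ _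
  have hMε : 0 < Mε := by rw [hMεdef]; exact lt_min (mul_pos hw0 hcα) (mul_pos hw0 hsα)
  have hMε1 : Mε ≤ w0 * Real.cos α := by rw [hMεdef]; exact min_le_left _ _
  have hMε2 : Mε ≤ w0 * Real.sin α := by rw [hMεdef]; exact min_le_right _ _
  obtain ⟨η, hηdef⟩ : ∃ g : ℕ → ℝ, g = fun k : ℕ => Mη / ((k : ℝ) + 2) := ⟨_, rfl⟩
  obtain ⟨ε, hεdef⟩ : ∃ g : ℕ → ℝ, g = fun k : ℕ => Mε / ((k : ℝ) + 2) := ⟨_, rfl⟩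
  have hk2 : ∀ k : ℕ, (2:ℝ) ≤ (k : ℝ) + 2 := fun k => by
    have := Nat.cast_nonneg (α := ℝ) k; linarith
  have hηpos : ∀ k, 0 < η k := by
    intro k; rw [hηdef]; exact div_pos hMη (by linarith only [hk2 k])
  have hηle : ∀ k, η k ≤ Mη / 2 := by
    intro k; rw [hηdef]
    rw [div_le_div_iff₀ (by linarith only [hk2 k]) two_pos]
    nlinarith only [hk2 k, hMη.le]
  have hη12 : ∀ k, η k ≤ 1/2 := fun k => le_trans (hηle k) (by linarith only [hMη1])
  have hsinη : ∀ k, 0 < Real.sin (η k) := fun k =>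
    Real.sin_pos_of_pos_of_lt_pi (hηpos k) (by linarith only [Real.pi_gt_three, hη12 k])
  have hcosη : ∀ k, 0 < Real.cos (η k) := fun k =>
    Real.cos_pos_of_mem_Ioo ⟨by linarith only [Real.pi_gt_three, hηpos k],
      by linarith only [Real.pi_gt_three, hη12 k]⟩
  have hsinle : ∀ k, Real.sin (η k) ≤ η k := fun k => Real.sin_le (hηpos k).le
  have hcosη2 : ∀ k, 1/2 ≤ Real.cos (η k) := by
    intro k
    have h5 := one_sub_cos_le (hηpos k).le (by linarith only [hη12 k])
    nlinarith only [hη12 k, hηpos k, h5]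
  have honesub : ∀ k, 1 - Real.cos (η k) ≤ η k := by
    intro k
    have h5 := one_sub_cos_le (hηpos k).le (by linarith only [hη12 k])
    nlinarith only [hη12 k, hηpos k, h5]
  have hεpos : ∀ k, 0 < ε k := by
    intro k; rw [hεdef]; exact div_pos hMε (by linarith only [hk2 k])
  have hεleM : ∀ k, ε k ≤ Mε := by
    intro k; rw [hεdef]
    rw [div_le_iff₀ (by linarith only [hk2 k])]
    nlinarith only [hk2 k, hMε.le]
  -- trig facts about the direction α - η k
  have hcosdir : ∀ k, Real.cos (α - η k)
      = Real.cos α * Real.cos (η k) + Real.sin α * Real.sin (η k) := fun k => Real.cos_sub α (η k)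
  have hsindir : ∀ k, Real.sin (α - η k)
      = Real.sin α * Real.cos (η k) - Real.cos α * Real.sin (η k) := fun k => Real.sin_sub α (η k)
  have hcosdirpos : ∀ k, 0 < Real.cos (α - η k) := by
    intro k
    rw [hcosdir k]
    linarith only [mul_pos hcα (hcosη k), mul_pos hsα (hsinη k)]
  have hsindirpos : ∀ k, 0 ≤ Real.sin (α - η k) := by
    intro k
    rw [hsindir k]
    have h4 : η k ≤ (Real.sin α / Real.cos α) / 2 := le_trans (hηle k) (by linarith only [hMη2])
    have h5 : Real.cos α * η k ≤ Real.sin α / 2 := by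
      have := mul_le_mul_of_nonneg_left h4 hcα.le
      calc Real.cos α * η k ≤ Real.cos α * (Real.sin α / Real.cos α / 2) := this
        _ = Real.sin α / 2 := by field_simp
    nlinarith only [hcosη2 k, hsinle k, hsα, hcα, (hsinη k).le, h5, hηpos k]
  -- the approach points lie in the big rectangle but not in R
  have hxbig : ∀ k, (p.1 + ε k * Real.cos (α - η k), p.2 + ε k * Real.sin (α - η k))
      ∈ Icc (0:ℝ) a ×ˢ Icc (0:ℝ) b := by
    intro k
    refine ⟨⟨?_, ?_⟩, ?_, ?_⟩
    · simp only
      linarith only [mul_pos (hεpos k) (hcosdirpos k), hp1a]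
    · simp only
      nlinarith only [Real.cos_le_one (α - η k), hεpos k, hεleM k, hMε1, hcosdirpos k, hkey1]
    · simp only
      linarith only [mul_nonneg (hεpos k).le (hsindirpos k), hp2a]
    · simp only
      nlinarith only [Real.sin_le_one (α - η k), hεpos k, hεleM k, hMε2, hsindirpos k, hkey2]
  have hxnotR : ∀ k, (p.1 + ε k * Real.cos (α - η k), p.2 + ε k * Real.sin (α - η k))
      ∉ rotRect p α w0 h0 := by
    intro k hmem
    rw [mem_rotRect] at hmem
    simp only [mem_Icc] at hmem
    have hco : -(p.1 + ε k * Real.cos (α - η k) - p.1) * Real.sin α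
        + (p.2 + ε k * Real.sin (α - η k) - p.2) * Real.cos α = -(ε k * Real.sin (η k)) := by
      rw [hcosdir k, hsindir k]
      linear_combination (-(ε k * Real.sin (η k))) * pythα
    have h9 := hmem.2.1
    rw [hco] at h9
    linarith only [h9, mul_pos (hεpos k) (hsinη k)]
  have hcov' : ∀ k, ∃ j, j ≠ j0 ∧
      (p.1 + ε k * Real.cos (α - η k), p.2 + ε k * Real.sin (α - η k))
        ∈ rotRect (v j) (θ j) (w j) (h j) := by
    intro k
    have hx : (p.1 + ε k * Real.cos (α - η k), p.2 + ε k * Real.sin (α - η k))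
        ∈ ⋃ j, rotRect (v j) (θ j) (w j) (h j) := by rw [hcover]; exact hxbig k
    obtain ⟨j, hj⟩ := mem_iUnion.mp hx
    refine ⟨j, ?_, hj⟩
    rintro rfl
    exact hxnotR k (by rw [← hR]; exact hj)
  choose f hf0 hfm using hcov'
  obtain ⟨j1, hj1inf⟩ := Finite.exists_infinite_fiber f
  have hj1inf' : (f ⁻¹' {j1}).Infinite := Set.infinite_coe_iff.mp hj1inf
  have hj1ne : j1 ≠ j0 := by
    obtain ⟨k, hk⟩ := hj1inf'.nonempty
    rw [← hk]
    exact hf0 k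
  have hseq : ∀ N : ℕ, ∃ k, N ≤ k ∧
      (p.1 + ε k * Real.cos (α - η k), p.2 + ε k * Real.sin (α - η k))
        ∈ rotRect (v j1) (θ j1) (w j1) (h j1) := by
    intro N
    obtain ⟨k, hk, hNk⟩ := hj1inf'.exists_gt N
    exact ⟨k, hNk.le, by rw [← hk]; exact hfm k⟩
  -- coordinates of p in rectangle j1's frame
  obtain ⟨s0, hs0⟩ : ∃ r : ℝ, r = (p.1 - (v j1).1) * Real.cos (θ j1)
      + (p.2 - (v j1).2) * Real.sin (θ j1) := ⟨_, rfl⟩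
  obtain ⟨t0, ht0⟩ : ∃ r : ℝ, r = -(p.1 - (v j1).1) * Real.sin (θ j1)
      + (p.2 - (v j1).2) * Real.cos (θ j1) := ⟨_, rfl⟩
  obtain ⟨c, hcdef⟩ : ∃ r : ℝ, r = Real.cos (α - θ j1) := ⟨_, rfl⟩
  obtain ⟨s, hsdef⟩ : ∃ r : ℝ, r = Real.sin (α - θ j1) := ⟨_, rfl⟩
  have hcexp : c = Real.cos α * Real.cos (θ j1) + Real.sin α * Real.sin (θ j1) := by
    rw [hcdef]; exact Real.cos_sub α (θ j1)
  have hsexp : s = Real.sin α * Real.cos (θ j1) - Real.cos α * Real.sin (θ j1) := by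
    rw [hsdef]; exact Real.sin_sub α (θ j1)
  have hc1 : -1 ≤ c := by rw [hcdef]; exact Real.neg_one_le_cos _
  have hc2 : c ≤ 1 := by rw [hcdef]; exact Real.cos_le_one _
  have hs1 : -1 ≤ s := by rw [hsdef]; exact Real.neg_one_le_sin _
  have hs2 : s ≤ 1 := by rw [hsdef]; exact Real.sin_le_one _
  have pyth2 : s^2 + c^2 = 1 := by rw [hsdef, hcdef]; exact Real.sin_sq_add_cos_sq _
  -- transformed membership of the approach points
  have hmem : ∀ N : ℕ, ∃ k, N ≤ k ∧
      (0 ≤ s0 + ε k * (c * Real.cos (η k) + s * Real.sin (η k))) ∧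
      (s0 + ε k * (c * Real.cos (η k) + s * Real.sin (η k)) ≤ w j1) ∧
      (0 ≤ t0 + ε k * (s * Real.cos (η k) - c * Real.sin (η k))) ∧
      (t0 + ε k * (s * Real.cos (η k) - c * Real.sin (η k)) ≤ h j1) := by
    intro N
    obtain ⟨k, hkN, hk⟩ := hseq N
    rw [mem_rotRect] at hk
    simp only [mem_Icc] at hk
    have hid1 : (p.1 + ε k * Real.cos (α - η k) - (v j1).1) * Real.cos (θ j1)
        + (p.2 + ε k * Real.sin (α - η k) - (v j1).2) * Real.sin (θ j1)
        = s0 + ε k * (c * Real.cos (η k) + s * Real.sin (η k)) := by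
      rw [hs0, hcexp, hsexp, hcosdir k, hsindir k]; ring
    have hid2 : -(p.1 + ε k * Real.cos (α - η k) - (v j1).1) * Real.sin (θ j1)
        + (p.2 + ε k * Real.sin (α - η k) - (v j1).2) * Real.cos (θ j1)
        = t0 + ε k * (s * Real.cos (η k) - c * Real.sin (η k)) := by
      rw [ht0, hcexp, hsexp, hcosdir k, hsindir k]; ring
    rw [hid1] at hk
    rw [hid2] at hk
    exact ⟨k, hkN, hk.1.1, hk.1.2, hk.2.1, hk.2.2⟩
  -- bound helpers for the inner trig expressions
  have hcosform : ∀ k, c * Real.cos (η k) + s * Real.sin (η k) = Real.cos (α - θ j1 - η k) := by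
    intro k
    have e : α - θ j1 - η k = (α - θ j1) - η k := by ring
    rw [e, Real.cos_sub, ← hcdef, ← hsdef]
  have hsinform : ∀ k, s * Real.cos (η k) - c * Real.sin (η k) = Real.sin (α - θ j1 - η k) := by
    intro k
    have e : α - θ j1 - η k = (α - θ j1) - η k := by ring
    rw [e, Real.sin_sub, ← hcdef, ← hsdef]
  have habs1 : ∀ k, -1 ≤ c * Real.cos (η k) + s * Real.sin (η k)
      ∧ c * Real.cos (η k) + s * Real.sin (η k) ≤ 1 := by
    intro k
    rw [hcosform k]
    exact ⟨Real.neg_one_le_cos _, Real.cos_le_one _⟩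
  have habs2 : ∀ k, -1 ≤ s * Real.cos (η k) - c * Real.sin (η k)
      ∧ s * Real.cos (η k) - c * Real.sin (η k) ≤ 1 := by
    intro k
    rw [hsinform k]
    exact ⟨Real.neg_one_le_sin _, Real.sin_le_one _⟩
  -- small epsilon extraction
  have hεsmall : ∀ ζ : ℝ, 0 < ζ → ∃ N : ℕ, ∀ k, N ≤ k → ε k ≤ ζ ∧ 2 * η k ≤ ζ := by
    intro ζ hζ
    obtain ⟨N, hN⟩ := exists_nat_gt (max (Mε / ζ) (2 * Mη / ζ))
    refine ⟨N, fun k hkN => ?_⟩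
    have hk' : (N:ℝ) ≤ k := Nat.cast_le.mpr hkN
    have h1 : Mε / ζ < (k:ℝ) + 2 := by
      have := le_max_left (Mε / ζ) (2 * Mη / ζ); linarith
    have h2 : 2 * Mη / ζ < (k:ℝ) + 2 := by
      have := le_max_right (Mε / ζ) (2 * Mη / ζ); linarith
    constructor
    · rw [hεdef]
      rw [div_le_iff₀ (by linarith only [hk2 k])]
      rw [div_lt_iff₀ hζ] at h1
      nlinarith only [h1, hζ]
    · rw [hηdef]
      simp only
      have hpos : (0:ℝ) < (k:ℝ) + 2 := by linarith only [hk2 k]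
      rw [div_lt_iff₀ hζ] at h2
      rw [show (2:ℝ) * (Mη / ((k:ℝ) + 2)) = (2*Mη) / ((k:ℝ)+2) by ring, div_le_iff₀ hpos]
      nlinarith only [h2, hζ]
  -- (F) p lies in rectangle j1 (in coordinates)
  have F1 : 0 ≤ s0 := by
    refine limit_nonneg (fun ζ hζ => ?_)
    obtain ⟨N, hN⟩ := hεsmall ζ hζ
    obtain ⟨k, hkN, hk1, _, _, _⟩ := hmem N
    exact ⟨ε k, _, hεpos k, (hN k hkN).1, (habs1 k).1, (habs1 k).2, hk1⟩
  have F2 : s0 ≤ w j1 := by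
    refine limit_le (fun ζ hζ => ?_)
    obtain ⟨N, hN⟩ := hεsmall ζ hζ
    obtain ⟨k, hkN, _, hk2', _, _⟩ := hmem N
    exact ⟨ε k, _, hεpos k, (hN k hkN).1, (habs1 k).1, (habs1 k).2, hk2'⟩
  have F3 : 0 ≤ t0 := by
    refine limit_nonneg (fun ζ hζ => ?_)
    obtain ⟨N, hN⟩ := hεsmall ζ hζ
    obtain ⟨k, hkN, _, _, hk3, _⟩ := hmem N
    exact ⟨ε k, _, hεpos k, (hN k hkN).1, (habs2 k).1, (habs2 k).2, hk3⟩
  have F4 : t0 ≤ h j1 := by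
    refine limit_le (fun ζ hζ => ?_)
    obtain ⟨N, hN⟩ := hεsmall ζ hζ
    obtain ⟨k, hkN, _, _, _, hk4⟩ := hmem N
    exact ⟨ε k, _, hεpos k, (hN k hkN).1, (habs2 k).1, (habs2 k).2, hk4⟩
  -- (G) sign conditions at the edge direction
  have G1 : s0 = 0 → 0 ≤ c := by
    intro h00
    refine limit_sign hc1 hc2 hs1 hs2 (fun ζ hζ => ?_)
    obtain ⟨N, hN⟩ := hεsmall ζ hζ
    obtain ⟨k, hkN, hk1, _, _, _⟩ := hmem N
    rw [h00, zero_add] at hk1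
    have hB : 0 ≤ c * Real.cos (η k) + s * Real.sin (η k) := by
      by_contra hB'
      push_neg at hB'
      nlinarith only [hεpos k, hB', hk1]
    exact ⟨η k, hηpos k, (hN k hkN).2, honesub k, hsinle k, (hsinη k).le,
      Real.cos_le_one _, hB⟩
  have G2 : s0 = w j1 → c ≤ 0 := by
    intro h00
    have : 0 ≤ -c := by
      refine limit_sign (c := -c) (s := -s) (by linarith only [hc2]) (by linarith only [hc1])
        (by linarith only [hs2]) (by linarith only [hs1]) (fun ζ hζ => ?_)
      obtain ⟨N, hN⟩ := hεsmall ζ hζ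
      obtain ⟨k, hkN, _, hk2', _, _⟩ := hmem N
      rw [h00] at hk2'
      have hB : c * Real.cos (η k) + s * Real.sin (η k) ≤ 0 := by
        by_contra hB'
        push_neg at hB'
        nlinarith only [hεpos k, hB', hk2']
      refine ⟨η k, hηpos k, (hN k hkN).2, honesub k, hsinle k, (hsinη k).le,
        Real.cos_le_one _, by linarith only [hB]⟩
    linarith only [this]
  have G3 : t0 = 0 → 0 ≤ s := by
    intro h00
    refine limit_sign (c := s) (s := -c) hs1 hs2 (by linarith only [hc2]) (by linarith only [hc1]) (fun ζ hζ => ?_)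
    obtain ⟨N, hN⟩ := hεsmall ζ hζ
    obtain ⟨k, hkN, _, _, hk3, _⟩ := hmem N
    rw [h00, zero_add] at hk3
    have hB : 0 ≤ s * Real.cos (η k) - c * Real.sin (η k) := by
      by_contra hB'
      push_neg at hB'
      nlinarith only [hεpos k, hB', hk3]
    refine ⟨η k, hηpos k, (hN k hkN).2, honesub k, hsinle k, (hsinη k).le,
      Real.cos_le_one _, by linarith only [hB]⟩
  have G4 : t0 = h j1 → s ≤ 0 := by
    intro h00
    have : 0 ≤ -s := by
      refine limit_sign (c := -s) (s := c) (by linarith only [hs2]) (by linarith only [hs1]) hc1 hc2 (fun ζ hζ => ?_)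
      obtain ⟨N, hN⟩ := hεsmall ζ hζ
      obtain ⟨k, hkN, _, _, _, hk4⟩ := hmem N
      rw [h00] at hk4
      have hB : s * Real.cos (η k) - c * Real.sin (η k) ≤ 0 := by
        by_contra hB'
        push_neg at hB'
        nlinarith only [hεpos k, hB', hk4]
      refine ⟨η k, hηpos k, (hN k hkN).2, honesub k, hsinle k, (hsinη k).le,
        Real.cos_le_one _, by linarith only [hB]⟩
    linarith only [this]
  -- the rectangle j1 does not meet the interior of R
  have hQR : ∀ z, z ∈ rotRect (v j1) (θ j1) (w j1) (h j1) → z ∉ rotRectInt p α w0 h0 := by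
    intro z hzQ hzR
    have h1 : z ∈ closure (rotRectInt (v j1) (θ j1) (w j1) (h j1)) :=
      rotRect_subset_closure (hw j1) (hh j1) hzQ
    obtain ⟨z', hz'R, hz'Q⟩ := mem_closure_iff.mp h1 _ (isOpen_rotRectInt p α w0 h0) hzR
    exact Set.disjoint_left.mp (hdisj j1 j0 hj1ne) hz'Q (by rw [hRint]; exact hz'R)
  -- the exclusion disjunction
  have hD : ∀ e : ℝ, 0 < e → e ≤ 1 →
      (s0 = 0 ∧ c * Real.cos e - s * Real.sin e < 0) ∨
      (s0 = w j1 ∧ 0 < c * Real.cos e - s * Real.sin e) ∨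
      (t0 = 0 ∧ s * Real.cos e + c * Real.sin e < 0) ∨
      (t0 = h j1 ∧ 0 < s * Real.cos e + c * Real.sin e) := by
    intro e he0 he1
    by_contra hD'
    push_neg at hD'
    obtain ⟨hd1, hd2, hd3, hd4⟩ := hD'
    have hcose : 0 < Real.cos e := Real.cos_pos_of_mem_Ioo
      ⟨by linarith only [Real.pi_gt_three, he0], by linarith only [Real.pi_gt_three, he1]⟩
    have hsine : 0 < Real.sin e := Real.sin_pos_of_pos_of_lt_pi he0
      (by linarith only [Real.pi_gt_three, he1])
    have habsc : |c * Real.cos e - s * Real.sin e| ≤ 1 := by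
      have hx : c * Real.cos e - s * Real.sin e = Real.cos (α - θ j1 + e) := by
        rw [Real.cos_add, ← hcdef, ← hsdef]
      rw [hx]; exact Real.abs_cos_le_one _
    have habss : |s * Real.cos e + c * Real.sin e| ≤ 1 := by
      have hx : s * Real.cos e + c * Real.sin e = Real.sin (α - θ j1 + e) := by
        rw [Real.sin_add, ← hcdef, ← hsdef]
      rw [hx]; exact Real.abs_sin_le_one _
    obtain ⟨t1, ht1, H1⟩ := slack_lemma (hw j1) F1 F2 habsc hd1 hd2
    obtain ⟨t2, ht2, H2⟩ := slack_lemma (hh j1) F3 F4 habss hd3 hd4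
    obtain ⟨t, htdef⟩ : ∃ r : ℝ, r = min (min t1 t2) (min w0 h0 / 2) := ⟨_, rfl⟩
    have ht : 0 < t := by
      rw [htdef]; exact lt_min (lt_min ht1 ht2) (half_pos (lt_min hw0 hh0))
    have htw : t ≤ w0 / 2 := by
      rw [htdef]
      refine le_trans (min_le_right _ _) ?_
      have h5 := min_le_left w0 h0; linarith only [h5]
    have hth : t ≤ h0 / 2 := by
      rw [htdef]
      refine le_trans (min_le_right _ _) ?_
      have h5 := min_le_right w0 h0; linarith only [h5]
    have hQmem : (p.1 + t * Real.cos (α + e), p.2 + t * Real.sin (α + e))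
        ∈ rotRect (v j1) (θ j1) (w j1) (h j1) := by
      rw [mem_rotRect]
      simp only [mem_Icc]
      have hid1 : (p.1 + t * Real.cos (α + e) - (v j1).1) * Real.cos (θ j1)
          + (p.2 + t * Real.sin (α + e) - (v j1).2) * Real.sin (θ j1)
          = s0 + t * (c * Real.cos e - s * Real.sin e) := by
        rw [hs0, hcexp, hsexp, Real.cos_add, Real.sin_add]; ring
      have hid2 : -(p.1 + t * Real.cos (α + e) - (v j1).1) * Real.sin (θ j1)
          + (p.2 + t * Real.sin (α + e) - (v j1).2) * Real.cos (θ j1)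
          = t0 + t * (s * Real.cos e + c * Real.sin e) := by
        rw [ht0, hcexp, hsexp, Real.cos_add, Real.sin_add]; ring
      rw [hid1, hid2]
      have h1 := H1 t ht (htdef ▸ le_trans (min_le_left _ _) (min_le_left _ _))
      have h2 := H2 t ht (htdef ▸ le_trans (min_le_left _ _) (min_le_right _ _))
      exact ⟨⟨h1.1, h1.2⟩, h2.1, h2.2⟩
    have hRmem : (p.1 + t * Real.cos (α + e), p.2 + t * Real.sin (α + e))
        ∈ rotRectInt p α w0 h0 := by
      rw [mem_rotRectInt]
      simp only [mem_Ioo]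
      have hid1 : (p.1 + t * Real.cos (α + e) - p.1) * Real.cos α
          + (p.2 + t * Real.sin (α + e) - p.2) * Real.sin α = t * Real.cos e := by
        rw [Real.cos_add, Real.sin_add]
        linear_combination t * Real.cos e * pythα
      have hid2 : -(p.1 + t * Real.cos (α + e) - p.1) * Real.sin α
          + (p.2 + t * Real.sin (α + e) - p.2) * Real.cos α = t * Real.sin e := by
        rw [Real.cos_add, Real.sin_add]
        linear_combination t * Real.sin e * pythα
      rw [hid1, hid2]
      refine ⟨⟨mul_pos ht hcose, ?_⟩, mul_pos ht hsine, ?_⟩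
      · nlinarith only [Real.cos_le_one e, ht, htw, hcose, hw0]
      · nlinarith only [Real.sin_le_one e, ht, hth, hsine, hh0]
    exact hQR _ hQmem hRmem
  -- basic trig values at 1
  have hsin1 : 0 < Real.sin 1 := Real.sin_pos_of_pos_of_lt_pi one_pos
    (by linarith only [Real.pi_gt_three])
  have hcos1' : 0 < Real.cos 1 := Real.cos_pos_of_mem_Ioo
    ⟨by linarith only [Real.pi_gt_three], by linarith only [Real.pi_gt_three]⟩
  -- the angle difference is a multiple of a right angle
  have hcs : c = 0 ∨ s = 0 := by
    by_contra hcs'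
    push_neg at hcs'
    obtain ⟨hc0, hs0'⟩ := hcs'
    obtain ⟨E, hEdef⟩ : ∃ r : ℝ, r = min |c| |s| := ⟨_, rfl⟩
    have hE : 0 < E := by rw [hEdef]; exact lt_min (abs_pos.mpr hc0) (abs_pos.mpr hs0')
    have hEc : E ≤ |c| := hEdef ▸ min_le_left _ _
    have hEs : E ≤ |s| := hEdef ▸ min_le_right _ _
    obtain ⟨e, hedef⟩ : ∃ r : ℝ, r = min (E/4) 1 := ⟨_, rfl⟩
    have he0 : 0 < e := by rw [hedef]; exact lt_min (by linarith only [hE]) one_pos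
    have he1 : e ≤ 1 := hedef ▸ min_le_right _ _
    have heE : e ≤ E/4 := hedef ▸ min_le_left _ _
    have h2cos : 1 - Real.cos e ≤ e := by
      have h5 := one_sub_cos_le he0.le (by linarith only [he1])
      nlinarith only [h5, he0, he1]
    have hsinee : Real.sin e ≤ e := Real.sin_le he0.le
    have hsine0 : 0 ≤ Real.sin e := Real.sin_nonneg_of_nonneg_of_le_pi he0.le
      (by linarith only [Real.pi_gt_three, he1])
    have hcose1 : Real.cos e ≤ 1 := Real.cos_le_one e
    have hdev1a : c - 2*e ≤ c * Real.cos e - s * Real.sin e := by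
      linarith only [mul_nonneg (by linarith only [hc2] : (0:ℝ) ≤ 1-c)
          (by linarith only [hcose1] : 0 ≤ 1 - Real.cos e),
        mul_nonneg (by linarith only [hs2] : (0:ℝ) ≤ 1-s) hsine0, h2cos, hsinee]
    have hdev1b : c * Real.cos e - s * Real.sin e ≤ c + 2*e := by
      linarith only [mul_nonneg (by linarith only [hc1] : (0:ℝ) ≤ 1+c)
          (by linarith only [hcose1] : 0 ≤ 1 - Real.cos e),
        mul_nonneg (by linarith only [hs1] : (0:ℝ) ≤ 1+s) hsine0, h2cos, hsinee]
    have hdev2a : s - 2*e ≤ s * Real.cos e + c * Real.sin e := by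
      linarith only [mul_nonneg (by linarith only [hs2] : (0:ℝ) ≤ 1-s)
          (by linarith only [hcose1] : 0 ≤ 1 - Real.cos e),
        mul_nonneg (by linarith only [hc1] : (0:ℝ) ≤ 1+c) hsine0, h2cos, hsinee]
    have hdev2b : s * Real.cos e + c * Real.sin e ≤ s + 2*e := by
      linarith only [mul_nonneg (by linarith only [hs1] : (0:ℝ) ≤ 1+s)
          (by linarith only [hcose1] : 0 ≤ 1 - Real.cos e),
        mul_nonneg (by linarith only [hc2] : (0:ℝ) ≤ 1-c) hsine0, h2cos, hsinee]
    rcases hD e he0 he1 with ⟨h1, h2⟩|⟨h1, h2⟩|⟨h1, h2⟩|⟨h1, h2⟩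
    · have h3 := G1 h1
      have habs : |c| = c := abs_of_pos (h3.lt_of_ne (Ne.symm hc0))
      linarith only [hdev1a, h2, habs, heE, hEc, hE]
    · have h3 := G2 h1
      have habs : |c| = -c := abs_of_neg (h3.lt_of_ne hc0)
      linarith only [hdev1b, h2, habs, heE, hEc, hE]
    · have h3 := G3 h1
      have habs : |s| = s := abs_of_pos (h3.lt_of_ne (Ne.symm hs0'))
      linarith only [hdev2a, h2, habs, heE, hEs, hE]
    · have h3 := G4 h1
      have habs : |s| = -s := abs_of_neg (h3.lt_of_ne hs0')
      linarith only [hdev2b, h2, habs, heE, hEs, hE]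
  -- the C' conditions for the downward direction
  have C1 : s0 = 0 → 0 ≤ s := by
    intro h00
    by_contra hneg
    push_neg at hneg
    rcases hD 1 one_pos le_rfl with ⟨h1, h2⟩|⟨h1, h2⟩|⟨h1, h2⟩|⟨h1, h2⟩
    · rcases hcs with hc0 | hs0''
      · rw [hc0] at h2; nlinarith only [h2, hneg, hsin1]
      · exact absurd hs0'' hneg.ne
    · exact (hw j1).ne' (by rw [← h1, h00])
    · linarith only [G3 h1, hneg]
    · rcases hcs with hc0 | hs0''
      · rw [hc0] at h2; nlinarith only [h2, hneg, hcos1']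
      · exact absurd hs0'' hneg.ne
  have C2 : s0 = w j1 → s ≤ 0 := by
    intro h00
    by_contra hpos
    push_neg at hpos
    rcases hD 1 one_pos le_rfl with ⟨h1, h2⟩|⟨h1, h2⟩|⟨h1, h2⟩|⟨h1, h2⟩
    · exact (hw j1).ne' (by rw [← h00, h1])
    · rcases hcs with hc0 | hs0''
      · rw [hc0] at h2; nlinarith only [h2, hpos, hsin1]
      · exact absurd hs0'' hpos.ne'
    · rcases hcs with hc0 | hs0''
      · rw [hc0] at h2; nlinarith only [h2, hpos, hcos1']
      · exact absurd hs0'' hpos.ne'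
    · linarith only [G4 h1, hpos]
  have C3 : t0 = 0 → 0 ≤ -c := by
    intro h00
    by_contra hneg
    push_neg at hneg
    have hcpos : 0 < c := by linarith only [hneg]
    rcases hD 1 one_pos le_rfl with ⟨h1, h2⟩|⟨h1, h2⟩|⟨h1, h2⟩|⟨h1, h2⟩
    · rcases hcs with hc0 | hs0''
      · exact absurd hc0 hcpos.ne'
      · rw [hs0''] at h2; nlinarith only [h2, hcpos, hcos1']
    · linarith only [G2 h1, hcpos]
    · rcases hcs with hc0 | hs0''
      · exact absurd hc0 hcpos.ne'
      · rw [hs0''] at h2; nlinarith only [h2, hcpos, hsin1]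
    · exact (hh j1).ne' (by rw [← h1, h00])
  have C4 : t0 = h j1 → -c ≤ 0 := by
    intro h00
    by_contra hpos
    push_neg at hpos
    have hcneg' : c < 0 := by linarith only [hpos]
    rcases hD 1 one_pos le_rfl with ⟨h1, h2⟩|⟨h1, h2⟩|⟨h1, h2⟩|⟨h1, h2⟩
    · linarith only [G1 h1, hcneg']
    · rcases hcs with hc0 | hs0''
      · exact absurd hc0 hcneg'.ne
      · rw [hs0''] at h2; nlinarith only [h2, hcneg', hcos1']
    · exact (hh j1).ne' (by rw [← h00, h1])
    · rcases hcs with hc0 | hs0''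
      · exact absurd hc0 hcneg'.ne
      · rw [hs0''] at h2; nlinarith only [h2, hcneg', hsin1]
  -- j1 is tilted
  have e1 : Real.sin (θ j1) = Real.sin α * c - Real.cos α * s := by
    have h3 : α - (α - θ j1) = θ j1 := by ring
    have h4 := Real.sin_sub α (α - θ j1)
    rw [h3] at h4
    rw [h4, hcdef, hsdef]
  have e2 : Real.cos (θ j1) = Real.cos α * c + Real.sin α * s := by
    have h3 : α - (α - θ j1) = θ j1 := by ring
    have h4 := Real.cos_sub α (α - θ j1)
    rw [h3] at h4
    rw [h4, hcdef, hsdef]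
  have hj1tilt : Real.sin (θ j1) ≠ 0 ∧ Real.cos (θ j1) ≠ 0 := by
    rcases hcs with hc0 | hs0'
    · have h9 : (s - 1) * (s + 1) = 0 := by linear_combination pyth2 - c * hc0
      have hs' : s = 1 ∨ s = -1 := by
        rcases mul_eq_zero.mp h9 with h | h
        · left; linarith only [h]
        · right; linarith only [h]
      constructor
      · intro hzero
        rw [e1, hc0] at hzero
        rcases hs' with h | h <;> rw [h] at hzero <;> linarith only [hzero, hcα]
      · intro hzero
        rw [e2, hc0] at hzero
        rcases hs' with h | h <;> rw [h] at hzero <;> linarith only [hzero, hsα]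
    · have h9 : (c - 1) * (c + 1) = 0 := by linear_combination pyth2 - s * hs0'
      have hc' : c = 1 ∨ c = -1 := by
        rcases mul_eq_zero.mp h9 with h | h
        · left; linarith only [h]
        · right; linarith only [h]
      constructor
      · intro hzero
        rw [e1, hs0'] at hzero
        rcases hc' with h | h <;> rw [h] at hzero <;> linarith only [hzero, hsα]
      · intro hzero
        rw [e2, hs0'] at hzero
        rcases hc' with h | h <;> rw [h] at hzero <;> linarith only [hzero, hcα]
  have hj1S : j1 ∈ S := by simp [hSdef, hj1tilt.1, hj1tilt.2]
  -- the point of rectangle j1 strictly below p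
  have hs1' : |s| ≤ 1 := abs_le.mpr ⟨hs1, hs2⟩
  have hcneg : |(-c)| ≤ 1 := by rw [abs_neg]; exact abs_le.mpr ⟨hc1, hc2⟩
  obtain ⟨t1, ht1, H1⟩ := slack_lemma (hw j1) F1 F2 hs1' C1 C2
  obtain ⟨t2, ht2, H2⟩ := slack_lemma (hh j1) F3 F4 hcneg C3 C4
  obtain ⟨t, htdef⟩ : ∃ r : ℝ, r = min t1 t2 := ⟨_, rfl⟩
  have ht : 0 < t := htdef ▸ lt_min ht1 ht2
  have h1 := H1 t ht (htdef ▸ min_le_left _ _)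
  have h2 := H2 t ht (htdef ▸ min_le_right _ _)
  have hzQ : (p.1 + t * Real.sin α, p.2 - t * Real.cos α)
      ∈ rotRect (v j1) (θ j1) (w j1) (h j1) := by
    rw [mem_rotRect]
    simp only [mem_Icc]
    have hid1 : (p.1 + t * Real.sin α - (v j1).1) * Real.cos (θ j1)
        + (p.2 - t * Real.cos α - (v j1).2) * Real.sin (θ j1) = s0 + t * s := by
      rw [hs0, hsexp]; ring
    have hid2 : -(p.1 + t * Real.sin α - (v j1).1) * Real.sin (θ j1)
        + (p.2 - t * Real.cos α - (v j1).2) * Real.cos (θ j1) = t0 + t * (-c) := by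
      rw [ht0, hcexp]; ring
    rw [hid1, hid2]
    exact ⟨⟨h1.1, h1.2⟩, h2.1, h2.2⟩
  have hfin1 : m j0 ≤ m j1 := hmin j1 hj1S
  have hfin2 : m j1 ≤ p.2 - t * Real.cos α := by simpa using hmle j1 _ hzQ
  rw [hmj0] at hfin1
  linarith only [hfin1, hfin2, mul_pos ht hcα]
end

section
/- The plane can be tiled by squares with pairwise distinct positive integer side lengths. -/
open Set

structure SqRect where
  L : ℤ
  R : ℤ
  B : ℤ
  T : ℤ

def st : ℕ → SqRect
  | 0 => ⟨0, 33, 0, 32⟩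
  | n+1 =>
    let r := st n
    match n % 4 with
    | 0 => ⟨r.L, r.R + (r.T - r.B), r.B, r.T⟩
    | 1 => ⟨r.L, r.R, r.B - (r.R - r.L), r.T⟩
    | 2 => ⟨r.L - (r.T - r.B), r.R, r.B, r.T⟩
    | _ => ⟨r.L, r.R, r.B, r.T + (r.R - r.L)⟩

def sp (n : ℕ) : ℤ × ℤ × ℤ :=
  match n % 4 with
  | 0 => ((st n).R, (st n).B, (st n).T - (st n).B)
  | 1 => ((st n).L, (st n).B - ((st n).R - (st n).L), (st n).R - (st n).L)
  | 2 => ((st n).L - ((st n).T - (st n).B), (st n).B, (st n).T - (st n).B)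
  | _ => ((st n).L, (st n).T, (st n).R - (st n).L)

def sqd : ℕ → ℤ × ℤ × ℤ
  | 0 => (0,14,18)
  | 1 => (18,17,15)
  | 2 => (18,10,7)
  | 3 => (25,9,8)
  | 4 => (0,0,14)
  | 5 => (14,10,4)
  | 6 => (14,0,10)
  | 7 => (24,9,1)
  | 8 => (24,0,9)
  | n+9 => sp n

def XX (k : ℕ) : ℝ := ((sqd k).1 : ℝ)
def YY (k : ℕ) : ℝ := ((sqd k).2.1 : ℝ)
def SS (k : ℕ) : ℕ := (sqd k).2.2.toNat

lemma st0 {n : ℕ} (h : n % 4 = 0) :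
    st (n+1) = ⟨(st n).L, (st n).R + ((st n).T - (st n).B), (st n).B, (st n).T⟩ := by
  rw [st, h]; rfl

lemma st1 {n : ℕ} (h : n % 4 = 1) :
    st (n+1) = ⟨(st n).L, (st n).R, (st n).B - ((st n).R - (st n).L), (st n).T⟩ := by
  rw [st, h]; rfl

lemma st2 {n : ℕ} (h : n % 4 = 2) :
    st (n+1) = ⟨(st n).L - ((st n).T - (st n).B), (st n).R, (st n).B, (st n).T⟩ := by
  rw [st, h]; rfl

lemma st3 {n : ℕ} (h : n % 4 = 3) :
    st (n+1) = ⟨(st n).L, (st n).R, (st n).B, (st n).T + ((st n).R - (st n).L)⟩ := by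
  rw [st, h]; rfl

lemma sp0 {n : ℕ} (h : n % 4 = 0) :
    sp n = ((st n).R, (st n).B, (st n).T - (st n).B) := by rw [sp, h]; rfl

lemma sp1 {n : ℕ} (h : n % 4 = 1) :
    sp n = ((st n).L, (st n).B - ((st n).R - (st n).L), (st n).R - (st n).L) := by rw [sp, h]; rfl

lemma sp2 {n : ℕ} (h : n % 4 = 2) :
    sp n = ((st n).L - ((st n).T - (st n).B), (st n).B, (st n).T - (st n).B) := by rw [sp, h]; rfl

lemma sp3 {n : ℕ} (h : n % 4 = 3) :
    sp n = ((st n).L, (st n).T, (st n).R - (st n).L) := by rw [sp, h]; rfl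

lemma inv (n : ℕ) : (st n).L ≤ 0 ∧ 33 ≤ (st n).R ∧ (st n).B ≤ 0 ∧ 32 ≤ (st n).T := by
  induction n with
  | zero => refine ⟨le_refl _, le_refl _, le_refl _, le_refl _⟩
  | succ n ih =>
    have h4 : n % 4 = 0 ∨ n % 4 = 1 ∨ n % 4 = 2 ∨ n % 4 = 3 := by omega
    rcases h4 with h|h|h|h
    · rw [st0 h]; simp only; omega
    · rw [st1 h]; simp only; omega
    · rw [st2 h]; simp only; omega
    · rw [st3 h]; simp only; omega

lemma mono (n : ℕ) : (st (n+1)).L ≤ (st n).L ∧ (st n).R ≤ (st (n+1)).R ∧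
    (st (n+1)).B ≤ (st n).B ∧ (st n).T ≤ (st (n+1)).T := by
  have h4 : n % 4 = 0 ∨ n % 4 = 1 ∨ n % 4 = 2 ∨ n % 4 = 3 := by omega
  have := inv n
  rcases h4 with h|h|h|h
  · rw [st0 h]; simp only; omega
  · rw [st1 h]; simp only; omega
  · rw [st2 h]; simp only; omega
  · rw [st3 h]; simp only; omega

lemma mono_le {m n : ℕ} (h : m ≤ n) : (st n).L ≤ (st m).L ∧ (st m).R ≤ (st n).R ∧
    (st n).B ≤ (st m).B ∧ (st m).T ≤ (st n).T := by
  induction n with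
  | zero =>
    have : m = 0 := by omega
    subst this; exact ⟨le_refl _, le_refl _, le_refl _, le_refl _⟩
  | succ n ih =>
    rcases Nat.lt_or_ge m (n+1) with h'|h'
    · have h1 := ih (by omega)
      have h2 := mono n
      exact ⟨h2.1.trans h1.1, h1.2.1.trans h2.2.1, h2.2.2.1.trans h1.2.2.1,
        h1.2.2.2.trans h2.2.2.2⟩
    · have : m = n+1 := by omega
      subst this; exact ⟨le_refl _, le_refl _, le_refl _, le_refl _⟩

lemma div4 (k : ℕ) : (st (4*k)).L ≤ -(32*k) ∧ 33 + 32*k ≤ (st (4*k)).R ∧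
    (st (4*k)).B ≤ -(32*k) ∧ 32 + 32*k ≤ (st (4*k)).T := by
  induction k with
  | zero => simp only [Nat.mul_zero, Nat.cast_zero, neg_zero, add_zero]; exact ⟨le_refl _, le_refl _, le_refl _, le_refl _⟩
  | succ k ih =>
    have e : 4*(k+1) = (4*k)+1+1+1+1 := by ring
    rw [e]
    have i0 := inv (4*k)
    have i1 := inv (4*k+1)
    have i2 := inv (4*k+1+1)
    have i3 := inv (4*k+1+1+1)
    have e0 := st0 (n := 4*k) (by omega)
    have e1 := st1 (n := 4*k+1) (by omega)
    have e2 := st2 (n := 4*k+1+1) (by omega)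
    have e3 := st3 (n := 4*k+1+1+1) (by omega)
    rw [e3, e2, e1, e0]
    rw [e2, e1, e0] at i3
    rw [e1, e0] at i2
    rw [e0] at i1
    simp only at *
    push_cast
    omega

lemma spos (k : ℕ) : 0 < (sqd k).2.2 := by
  match k with
  | 0 | 1 | 2 | 3 | 4 | 5 | 6 | 7 | 8 => decide
  | n+9 =>
    show 0 < (sp n).2.2
    have := inv n
    have h4 : n % 4 = 0 ∨ n % 4 = 1 ∨ n % 4 = 2 ∨ n % 4 = 3 := by omega
    rcases h4 with h|h|h|h
    · rw [sp0 h]; simp only; omega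
    · rw [sp1 h]; simp only; omega
    · rw [sp2 h]; simp only; omega
    · rw [sp3 h]; simp only; omega

lemma Scast (k : ℕ) : ((SS k : ℤ)) = (sqd k).2.2 := Int.toNat_of_nonneg (spos k).le

lemma ScastR (k : ℕ) : ((SS k : ℝ)) = (((sqd k).2.2 : ℤ) : ℝ) := by
  rw [← Scast k]; push_cast; ring

def rect (n : ℕ) : Set (ℝ × ℝ) :=
  Icc ((st n).L : ℝ) ((st n).R : ℝ) ×ˢ Icc ((st n).B : ℝ) ((st n).T : ℝ)

def csq (k : ℕ) : Set (ℝ × ℝ) :=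
  Icc (XX k) (XX k + (SS k : ℝ)) ×ˢ Icc (YY k) (YY k + (SS k : ℝ))

def osq (k : ℕ) : Set (ℝ × ℝ) :=
  Ioo (XX k) (XX k + (SS k : ℝ)) ×ˢ Ioo (YY k) (YY k + (SS k : ℝ))

lemma csq_spiral (n : ℕ) : csq (n+9) =
    Icc (((sp n).1 : ℝ)) (((sp n).1 + (sp n).2.2 : ℤ) : ℝ) ×ˢ
    Icc (((sp n).2.1 : ℝ)) (((sp n).2.1 + (sp n).2.2 : ℤ) : ℝ) := by
  have hx : XX (n+9) = ((sp n).1 : ℝ) := rfl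
  have hy : YY (n+9) = ((sp n).2.1 : ℝ) := rfl
  have hs : ((SS (n+9) : ℝ)) = (((sp n).2.2 : ℤ) : ℝ) := ScastR (n+9)
  rw [csq, hx, hy, hs]; push_cast; ring_nf

lemma rect_succ (n : ℕ) : rect (n+1) = rect n ∪ csq (n+9) := by
  have hI := inv n
  have h4 : n % 4 = 0 ∨ n % 4 = 1 ∨ n % 4 = 2 ∨ n % 4 = 3 := by omega
  rcases h4 with h|h|h|h
  · rw [rect, st0 h, csq_spiral n, sp0 h, rect]
    simp only
    have e : (st n).B + ((st n).T - (st n).B) = (st n).T := by ring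
    rw [e, ← Set.union_prod, Set.Icc_union_Icc_eq_Icc]
    · exact_mod_cast by omega
    · exact_mod_cast by omega
  · rw [rect, st1 h, csq_spiral n, sp1 h, rect]
    simp only
    have e : (st n).B - ((st n).R - (st n).L) + ((st n).R - (st n).L) = (st n).B := by ring
    have e2 : (st n).L + ((st n).R - (st n).L) = (st n).R := by ring
    rw [e, e2, ← Set.prod_union, Set.union_comm, Set.Icc_union_Icc_eq_Icc]
    · exact_mod_cast by omega
    · exact_mod_cast by omega
  · rw [rect, st2 h, csq_spiral n, sp2 h, rect]
    simp only
    have e : (st n).L - ((st n).T - (st n).B) + ((st n).T - (st n).B) = (st n).L := by ring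
    have e2 : (st n).B + ((st n).T - (st n).B) = (st n).T := by ring
    rw [e, e2, ← Set.union_prod, Set.union_comm, Set.Icc_union_Icc_eq_Icc]
    · exact_mod_cast by omega
    · exact_mod_cast by omega
  · rw [rect, st3 h, csq_spiral n, sp3 h, rect]
    simp only
    have e2 : (st n).L + ((st n).R - (st n).L) = (st n).R := by ring
    rw [e2, ← Set.prod_union, Set.Icc_union_Icc_eq_Icc]
    · exact_mod_cast by omega
    · exact_mod_cast by omega

lemma rect_mono {m n : ℕ} (h : m ≤ n) : rect m ⊆ rect n := by
  have := mono_le h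
  exact Set.prod_mono (Set.Icc_subset_Icc (by exact_mod_cast this.1) (by exact_mod_cast this.2.1))
    (Set.Icc_subset_Icc (by exact_mod_cast this.2.2.1) (by exact_mod_cast this.2.2.2))

lemma csq_subset_rect : ∀ n k, k < n + 9 → csq k ⊆ rect n := by
  intro n
  induction n with
  | zero =>
    intro k hk
    interval_cases k <;>
    · rw [csq, rect]
      refine Set.prod_mono (Set.Icc_subset_Icc ?_ ?_) (Set.Icc_subset_Icc ?_ ?_) <;>
        norm_num [XX, YY, ScastR, sqd, st]
  | succ n ih =>
    intro k hk
    rcases Nat.lt_or_ge k (n+9) with h'|h'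
    · exact (ih k h').trans (rect_mono (Nat.le_succ n))
    · have : k = n + 9 := by omega
      subst this
      rw [rect_succ n]
      exact Set.subset_union_right

lemma base_cover : rect 0 ⊆ ⋃ k, csq k := by
  rintro ⟨p, q⟩ hpq
  simp only [rect, st, Set.mem_prod, Set.mem_Icc] at hpq
  obtain ⟨⟨hp0, hp33⟩, hq0, hq32⟩ := hpq
  norm_num at hp0 hp33 hq0 hq32
  simp only [Set.mem_iUnion]
  have memtac : ∀ i : ℕ, ∀ a b s : ℤ, sqd i = (a, b, s) → (a : ℝ) ≤ p → p ≤ a + s →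
      (b : ℝ) ≤ q → q ≤ b + s → (p, q) ∈ csq i := by
    intro i a b s hi h1 h2 h3 h4
    rw [csq]
    have hx : XX i = (a : ℝ) := by rw [XX, hi]
    have hy : YY i = (b : ℝ) := by rw [YY, hi]
    have hs : ((SS i : ℝ)) = (s : ℝ) := by rw [ScastR, hi]
    rw [hx, hy, hs]
    exact ⟨⟨h1, h2⟩, h3, h4⟩
  rcases le_or_gt 14 q with hq14 | hq14
  · rcases le_or_gt p 18 with hp18 | hp18
    · exact ⟨0, memtac 0 0 14 18 rfl (by norm_num; linarith) (by norm_num; linarith)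
        (by norm_num; linarith) (by norm_num; linarith)⟩
    · rcases le_or_gt 17 q with hq17 | hq17
      · exact ⟨1, memtac 1 18 17 15 rfl (by norm_num; linarith) (by norm_num; linarith)
          (by norm_num; linarith) (by norm_num; linarith)⟩
      · rcases le_or_gt p 25 with hp25 | hp25
        · exact ⟨2, memtac 2 18 10 7 rfl (by norm_num; linarith) (by norm_num; linarith)
            (by norm_num; linarith) (by norm_num; linarith)⟩
        · exact ⟨3, memtac 3 25 9 8 rfl (by norm_num; linarith) (by norm_num; linarith)
            (by norm_num; linarith) (by norm_num; linarith)⟩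
  · rcases le_or_gt p 14 with hp14 | hp14
    · exact ⟨4, memtac 4 0 0 14 rfl (by norm_num; linarith) (by norm_num; linarith)
        (by norm_num; linarith) (by norm_num; linarith)⟩
    · rcases le_or_gt p 18 with hp18 | hp18
      · rcases le_or_gt 10 q with hq10 | hq10
        · exact ⟨5, memtac 5 14 10 4 rfl (by norm_num; linarith) (by norm_num; linarith)
            (by norm_num; linarith) (by norm_num; linarith)⟩
        · exact ⟨6, memtac 6 14 0 10 rfl (by norm_num; linarith) (by norm_num; linarith)
            (by norm_num; linarith) (by norm_num; linarith)⟩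
      · rcases le_or_gt p 24 with hp24 | hp24
        · rcases le_or_gt q 10 with hq10 | hq10
          · exact ⟨6, memtac 6 14 0 10 rfl (by norm_num; linarith) (by norm_num; linarith)
              (by norm_num; linarith) (by norm_num; linarith)⟩
          · exact ⟨2, memtac 2 18 10 7 rfl (by norm_num; linarith) (by norm_num; linarith)
              (by norm_num; linarith) (by norm_num; linarith)⟩
        · rcases le_or_gt p 25 with hp25 | hp25
          · rcases le_or_gt q 9 with hq9 | hq9
            · exact ⟨8, memtac 8 24 0 9 rfl (by norm_num; linarith) (by norm_num; linarith)
                (by norm_num; linarith) (by norm_num; linarith)⟩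
            · rcases le_or_gt q 10 with hq10 | hq10
              · exact ⟨7, memtac 7 24 9 1 rfl (by norm_num; linarith) (by norm_num; linarith)
                  (by norm_num; linarith) (by norm_num; linarith)⟩
              · exact ⟨2, memtac 2 18 10 7 rfl (by norm_num; linarith) (by norm_num; linarith)
                  (by norm_num; linarith) (by norm_num; linarith)⟩
          · rcases le_or_gt q 9 with hq9 | hq9
            · exact ⟨8, memtac 8 24 0 9 rfl (by norm_num; linarith) (by norm_num; linarith)
                (by norm_num; linarith) (by norm_num; linarith)⟩
            · exact ⟨3, memtac 3 25 9 8 rfl (by norm_num; linarith) (by norm_num; linarith)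
                (by norm_num; linarith) (by norm_num; linarith)⟩

lemma rect_subset_iUnion : ∀ n, rect n ⊆ ⋃ k, csq k := by
  intro n
  induction n with
  | zero => exact base_cover
  | succ n ih =>
    rw [rect_succ n]
    exact Set.union_subset ih (Set.subset_iUnion csq (n+9))

lemma sp_side_lb (n : ℕ) : 32 ≤ (sp n).2.2 := by
  have := inv n
  have h4 : n % 4 = 0 ∨ n % 4 = 1 ∨ n % 4 = 2 ∨ n % 4 = 3 := by omega
  rcases h4 with h|h|h|h
  · rw [sp0 h]; simp only; omega
  · rw [sp1 h]; simp only; omega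
  · rw [sp2 h]; simp only; omega
  · rw [sp3 h]; simp only; omega

lemma sp_side_succ (n : ℕ) : (sp n).2.2 < (sp (n+1)).2.2 := by
  have hI := inv n
  have h4 : n % 4 = 0 ∨ n % 4 = 1 ∨ n % 4 = 2 ∨ n % 4 = 3 := by omega
  rcases h4 with h|h|h|h
  · rw [sp0 h, sp1 (by omega : (n+1) % 4 = 1), st0 h]; simp only; omega
  · rw [sp1 h, sp2 (by omega : (n+1) % 4 = 2), st1 h]; simp only; omega
  · rw [sp2 h, sp3 (by omega : (n+1) % 4 = 3), st2 h]; simp only; omega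
  · rw [sp3 h, sp0 (by omega : (n+1) % 4 = 0), st3 h]; simp only; omega

lemma sp_side_mono : StrictMono (fun n => (sp n).2.2) :=
  strictMono_nat_of_lt_succ sp_side_succ

lemma SS_inj : Function.Injective SS := by
  have key : ∀ k, (SS k : ℤ) = (sqd k).2.2 := Scast
  intro k l h
  by_contra hne
  wlog hkl : k < l generalizing k l
  · exact this h.symm (Ne.symm hne) (by omega)
  have hv : (sqd k).2.2 = (sqd l).2.2 := by rw [← key, ← key, h]
  rcases Nat.lt_or_ge l 9 with hl9 | hl9
  · have hk9 : k < 9 := by omega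
    interval_cases k <;> interval_cases l <;> simp_all [sqd]
  · rcases Nat.lt_or_ge k 9 with hk9 | hk9
    · obtain ⟨m, rfl⟩ : ∃ m, l = m + 9 := ⟨l - 9, by omega⟩
      have h1 : (sqd (m+9)).2.2 = (sp m).2.2 := rfl
      have h2 := sp_side_lb m
      have h3 : (sqd k).2.2 ≤ 18 := by interval_cases k <;> decide
      omega
    · obtain ⟨m, rfl⟩ : ∃ m, l = m + 9 := ⟨l - 9, by omega⟩
      obtain ⟨m', rfl⟩ : ∃ m', k = m' + 9 := ⟨k - 9, by omega⟩
      have : (sp m').2.2 < (sp m).2.2 := sp_side_mono (by omega)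
      have h1 : (sqd (m+9)).2.2 = (sp m).2.2 := rfl
      have h2 : (sqd (m'+9)).2.2 = (sp m').2.2 := rfl
      omega

lemma disjX {a b c d a' b' c' d' : ℝ} (h : b ≤ a') :
    Disjoint (Ioo a b ×ˢ Ioo c d) (Ioo a' b' ×ˢ Ioo c' d') := by
  rw [Set.disjoint_left]
  rintro ⟨p, q⟩ ⟨⟨_, h2⟩, _⟩ ⟨⟨h3, _⟩, _⟩
  simp only at *
  linarith

lemma disjY {a b c d a' b' c' d' : ℝ} (h : d ≤ c') :
    Disjoint (Ioo a b ×ˢ Ioo c d) (Ioo a' b' ×ˢ Ioo c' d') := by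
  rw [Set.disjoint_left]
  rintro ⟨p, q⟩ ⟨_, _, h2⟩ ⟨_, h3, _⟩
  simp only at *
  linarith

lemma osq_subset_csq (k : ℕ) : osq k ⊆ csq k :=
  Set.prod_mono Set.Ioo_subset_Icc_self Set.Ioo_subset_Icc_self

lemma disj_lt : ∀ k l, k < l → Disjoint (osq k) (osq l) := by
  intro k l hkl
  rcases Nat.lt_or_ge l 9 with hl9 | hl9
  · have hk9 : k < 9 := by omega
    simp only [osq]
    interval_cases k <;> interval_cases l
    · exact disjX (by norm_num [XX, ScastR, sqd])
    · exact disjX (by norm_num [XX, ScastR, sqd])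
    · exact disjX (by norm_num [XX, ScastR, sqd])
    · exact (disjY (by norm_num [YY, ScastR, sqd])).symm
    · exact (disjY (by norm_num [YY, ScastR, sqd])).symm
    · exact (disjY (by norm_num [YY, ScastR, sqd])).symm
    · exact disjX (by norm_num [XX, ScastR, sqd])
    · exact disjX (by norm_num [XX, ScastR, sqd])
    · exact (disjY (by norm_num [YY, ScastR, sqd])).symm
    · exact (disjY (by norm_num [YY, ScastR, sqd])).symm
    · exact (disjX (by norm_num [XX, ScastR, sqd])).symm
    · exact (disjX (by norm_num [XX, ScastR, sqd])).symm
    · exact (disjY (by norm_num [YY, ScastR, sqd])).symm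
    · exact (disjY (by norm_num [YY, ScastR, sqd])).symm
    · exact (disjY (by norm_num [YY, ScastR, sqd])).symm
    · exact disjX (by norm_num [XX, ScastR, sqd])
    · exact (disjX (by norm_num [XX, ScastR, sqd])).symm
    · exact (disjX (by norm_num [XX, ScastR, sqd])).symm
    · exact (disjY (by norm_num [YY, ScastR, sqd])).symm
    · exact (disjY (by norm_num [YY, ScastR, sqd])).symm
    · exact (disjY (by norm_num [YY, ScastR, sqd])).symm
    · exact (disjX (by norm_num [XX, ScastR, sqd])).symm
    · exact (disjX (by norm_num [XX, ScastR, sqd])).symm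
    · exact (disjX (by norm_num [XX, ScastR, sqd])).symm
    · exact (disjX (by norm_num [XX, ScastR, sqd])).symm
    · exact (disjY (by norm_num [YY, ScastR, sqd])).symm
    · exact disjX (by norm_num [XX, ScastR, sqd])
    · exact disjX (by norm_num [XX, ScastR, sqd])
    · exact disjX (by norm_num [XX, ScastR, sqd])
    · exact disjX (by norm_num [XX, ScastR, sqd])
    · exact (disjY (by norm_num [YY, ScastR, sqd])).symm
    · exact disjX (by norm_num [XX, ScastR, sqd])
    · exact disjX (by norm_num [XX, ScastR, sqd])
    · exact disjX (by norm_num [XX, ScastR, sqd])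
    · exact disjX (by norm_num [XX, ScastR, sqd])
    · exact (disjY (by norm_num [YY, ScastR, sqd])).symm
  · obtain ⟨m, rfl⟩ : ∃ m, l = m + 9 := ⟨l - 9, by omega⟩
    have hsub : osq k ⊆ rect m := (osq_subset_csq k).trans (csq_subset_rect m k (by omega))
    have hI := inv m
    rw [Set.disjoint_right]
    intro p hp hpk
    have hr := hsub hpk
    rw [rect] at hr
    have hL : ((st m).L : ℝ) ≤ p.1 := hr.1.1
    have hR : p.1 ≤ ((st m).R : ℝ) := hr.1.2
    have hB : ((st m).B : ℝ) ≤ p.2 := hr.2.1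
    have hT : p.2 ≤ ((st m).T : ℝ) := hr.2.2
    have h4 : m % 4 = 0 ∨ m % 4 = 1 ∨ m % 4 = 2 ∨ m % 4 = 3 := by omega
    rcases h4 with h|h|h|h
    · have hx : XX (m+9) = ((st m).R : ℝ) := by
        rw [XX]; show ((sp m).1 : ℝ) = _; rw [sp0 h]
      have h1 : XX (m+9) < p.1 := hp.1.1
      rw [hx] at h1; linarith
    · have hy : YY (m+9) + (SS (m+9) : ℝ) = ((st m).B : ℝ) := by
        rw [YY, ScastR]
        show ((sp m).2.1 : ℝ) + ((sp m).2.2 : ℝ) = _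
        rw [sp1 h]; push_cast; ring
      have h1 : p.2 < YY (m+9) + (SS (m+9) : ℝ) := hp.2.2
      rw [hy] at h1; linarith
    · have hx : XX (m+9) + (SS (m+9) : ℝ) = ((st m).L : ℝ) := by
        rw [XX, ScastR]
        show ((sp m).1 : ℝ) + ((sp m).2.2 : ℝ) = _
        rw [sp2 h]; push_cast; ring
      have h1 : p.1 < XX (m+9) + (SS (m+9) : ℝ) := hp.1.2
      rw [hx] at h1; linarith
    · have hy : YY (m+9) = ((st m).T : ℝ) := by
        rw [YY]; show ((sp m).2.1 : ℝ) = _; rw [sp3 h]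
      have h1 : YY (m+9) < p.2 := hp.2.1
      rw [hy] at h1; linarith

/-- The plane can be tiled by squares with pairwise distinct positive integer
side lengths: there is a family of axis-parallel squares with integer sides,
pairwise distinct side lengths, pairwise disjoint interiors, covering ℝ². -/
theorem plane_tiling_distinct_integer_squares :
    ∃ (x y : ℕ → ℝ) (s : ℕ → ℕ),
      (∀ k, 0 < s k) ∧ Function.Injective s ∧
      (⋃ k, Icc (x k) (x k + (s k : ℝ)) ×ˢ Icc (y k) (y k + (s k : ℝ)))
        = (univ : Set (ℝ × ℝ)) ∧
      (∀ k l, k ≠ l →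
        Disjoint (Ioo (x k) (x k + (s k : ℝ)) ×ˢ Ioo (y k) (y k + (s k : ℝ)))
                 (Ioo (x l) (x l + (s l : ℝ)) ×ˢ Ioo (y l) (y l + (s l : ℝ)))) := by
  refine ⟨XX, YY, SS, ?_, SS_inj, ?_, ?_⟩
  · intro k
    have := spos k
    rw [SS]
    omega
  · apply Set.eq_univ_of_univ_subset
    intro p _
    obtain ⟨n, hn⟩ := exists_nat_ge (max |p.1| |p.2|)
    have hd := div4 n
    have hd1 : ((st (4*n)).L : ℝ) ≤ -(32*n) := by exact_mod_cast hd.1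
    have hd2 : (33 + 32*n : ℝ) ≤ ((st (4*n)).R : ℝ) := by exact_mod_cast hd.2.1
    have hd3 : ((st (4*n)).B : ℝ) ≤ -(32*n) := by exact_mod_cast hd.2.2.1
    have hd4 : (32 + 32*n : ℝ) ≤ ((st (4*n)).T : ℝ) := by exact_mod_cast hd.2.2.2
    have hn' : (0:ℝ) ≤ n := Nat.cast_nonneg n
    have ha1 := neg_abs_le p.1
    have ha2 := le_abs_self p.1
    have ha3 := neg_abs_le p.2
    have ha4 := le_abs_self p.2
    have hm1 := le_max_left |p.1| |p.2|
    have hm2 := le_max_right |p.1| |p.2|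
    have hp : p ∈ rect (4*n) := by
      rw [rect]
      exact ⟨⟨by linarith, by linarith⟩, by linarith, by linarith⟩
    exact rect_subset_iUnion (4*n) hp
  · intro k l hne
    rcases lt_or_gt_of_ne hne with h | h
    · exact disj_lt k l h
    · exact (disj_lt l k h).symm
end

section
/- If a square is partitioned into finitely many rectangles each with side ratio R or 1/R (R > 0), then R is algebraic over the rationals, i.e., R is a root of a nonzero polynomial with integer coefficients. -/
open Set Polynomial Finset

private lemma f_zero {f : ℝ → ℝ} (hf : ∀ a b, f (a + b) = f a + f b) : f 0 = 0 := by
  have := hf 0 0; simp at this; linarith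

private lemma f_sub {f : ℝ → ℝ} (hf : ∀ a b, f (a + b) = f a + f b) (u v : ℝ) :
    f (u - v) = f u - f v := by
  have h := hf (u - v) v
  rw [sub_add_cancel] at h
  linarith

private lemma tele {f : ℝ → ℝ} (hf : ∀ a b, f (a + b) = f a + f b) (t : ℕ → ℝ)
    {a b : ℕ} (hab : a ≤ b) :
    ∑ k ∈ Finset.Ico a b, f (t (k + 1) - t k) = f (t b) - f (t a) := by
  induction b, hab using Nat.le_induction with
  | base => simp
  | succ b hb ih =>
      rw [Finset.sum_Ico_succ_top hb, ih, f_sub hf]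
      ring

private lemma exists_grid (s : Finset ℝ) (h0 : (0:ℝ) ∈ s) (h1 : (1:ℝ) ∈ s)
    (hsub : ∀ a ∈ s, 0 ≤ a ∧ a ≤ 1) :
    ∃ (m : ℕ) (t : ℕ → ℝ), t 0 = 0 ∧ t m = 1 ∧ Monotone t ∧
      (∀ a b, a < b → b ≤ m → t a < t b) ∧ (∀ a ∈ s, ∃ k, k ≤ m ∧ t k = a) := by
  have hcard : 2 ≤ s.card := Finset.one_lt_card.2 ⟨0, h0, 1, h1, by norm_num⟩
  obtain ⟨m, hm⟩ : ∃ m, s.card = m + 1 := ⟨s.card - 1, by omega⟩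
  refine ⟨m, fun k => s.orderEmbOfFin hm ⟨min k m, by omega⟩, ?_, ?_, ?_, ?_, ?_⟩
  · show s.orderEmbOfFin hm ⟨min 0 m, by omega⟩ = 0
    have hz : (⟨min 0 m, by omega⟩ : Fin (m+1)) = ⟨0, by omega⟩ := by
      apply Fin.ext; simp
    rw [hz, Finset.orderEmbOfFin_zero hm (by omega)]
    apply le_antisymm
    · exact Finset.min'_le s 0 h0
    · exact Finset.le_min' _ _ _ fun a ha => (hsub a ha).1
  · show s.orderEmbOfFin hm ⟨min m m, by omega⟩ = 1
    have hz : (⟨min m m, by omega⟩ : Fin (m+1)) = ⟨m + 1 - 1, by omega⟩ := by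
      apply Fin.ext; simp
    rw [hz, Finset.orderEmbOfFin_last hm (by omega)]
    apply le_antisymm
    · exact Finset.max'_le _ _ _ fun a ha => (hsub a ha).2
    · exact Finset.le_max' s 1 h1
  · intro a b hab
    exact (s.orderEmbOfFin hm).monotone (by simp only [Fin.mk_le_mk]; omega)
  · intro a b hab hbm
    exact (s.orderEmbOfFin hm).strictMono (by simp only [Fin.mk_lt_mk]; omega)
  · intro a ha
    have : a ∈ Set.range (s.orderEmbOfFin hm) := by
      rw [Finset.range_orderEmbOfFin]; exact ha
    obtain ⟨k, hk⟩ := this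
    refine ⟨k.1, by omega, ?_⟩
    show s.orderEmbOfFin hm ⟨min k.1 m, by omega⟩ = a
    have hzz : (⟨min k.1 m, by omega⟩ : Fin (m+1)) = k := by
      apply Fin.ext; simp; omega
    rw [hzz]; exact hk

private lemma grid_sum {n : ℕ} (x y w h : Fin n → ℝ) (hw : ∀ i, 0 < w i) (hh : ∀ i, 0 < h i)
    (hcover : (⋃ i, Icc (x i) (x i + w i) ×ˢ Icc (y i) (y i + h i))
      = Icc (0:ℝ) 1 ×ˢ Icc (0:ℝ) 1)
    (hdisj : ∀ i j, i ≠ j →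
      Disjoint (Ioo (x i) (x i + w i) ×ˢ Ioo (y i) (y i + h i))
               (Ioo (x j) (x j + w j) ×ˢ Ioo (y j) (y j + h j)))
    (f : ℝ → ℝ) (hf : ∀ a b, f (a + b) = f a + f b) :
    ∑ i, f (w i) * f (h i) = f 1 * f 1 := by
  classical
  have hsq : ∀ i, 0 ≤ x i ∧ x i + w i ≤ 1 ∧ 0 ≤ y i ∧ y i + h i ≤ 1 := by
    intro i
    have h1 : ((x i, y i) : ℝ × ℝ) ∈ Icc (0:ℝ) 1 ×ˢ Icc (0:ℝ) 1 := by
      rw [← hcover]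
      refine mem_iUnion.2 ⟨i, ?_⟩
      simp only [Set.mem_prod, Set.mem_Icc]
      refine ⟨⟨?_, ?_⟩, ?_, ?_⟩ <;> linarith [hw i, hh i]
    have h2 : ((x i + w i, y i + h i) : ℝ × ℝ) ∈ Icc (0:ℝ) 1 ×ˢ Icc (0:ℝ) 1 := by
      rw [← hcover]
      refine mem_iUnion.2 ⟨i, ?_⟩
      simp only [Set.mem_prod, Set.mem_Icc]
      refine ⟨⟨?_, ?_⟩, ?_, ?_⟩ <;> linarith [hw i, hh i]
    simp only [Set.mem_prod, Set.mem_Icc] at h1 h2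
    exact ⟨h1.1.1, h2.1.2, h1.2.1, h2.2.2⟩
  set sx : Finset ℝ :=
    ({0, 1} : Finset ℝ) ∪ Finset.image x Finset.univ
      ∪ Finset.image (fun i => x i + w i) Finset.univ with hsx
  set sy : Finset ℝ :=
    ({0, 1} : Finset ℝ) ∪ Finset.image y Finset.univ
      ∪ Finset.image (fun i => y i + h i) Finset.univ with hsy
  have memx : ∀ a ∈ sx, 0 ≤ a ∧ a ≤ 1 := by
    intro a ha
    simp only [hsx, Finset.mem_union, Finset.mem_insert, Finset.mem_singleton,
      Finset.mem_image, Finset.mem_univ, true_and] at ha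
    rcases ha with ((rfl | rfl) | ⟨i, rfl⟩) | ⟨i, rfl⟩
    · norm_num
    · norm_num
    · exact ⟨(hsq i).1, by linarith [(hsq i).2.1, hw i]⟩
    · exact ⟨by linarith [(hsq i).1, hw i], (hsq i).2.1⟩
  have memy : ∀ a ∈ sy, 0 ≤ a ∧ a ≤ 1 := by
    intro a ha
    simp only [hsy, Finset.mem_union, Finset.mem_insert, Finset.mem_singleton,
      Finset.mem_image, Finset.mem_univ, true_and] at ha
    rcases ha with ((rfl | rfl) | ⟨i, rfl⟩) | ⟨i, rfl⟩
    · norm_num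
    · norm_num
    · exact ⟨(hsq i).2.2.1, by linarith [(hsq i).2.2.2, hh i]⟩
    · exact ⟨by linarith [(hsq i).2.2.1, hh i], (hsq i).2.2.2⟩
  obtain ⟨m, t, ht0, htm, htmono, htstrict, htsurj⟩ :=
    exists_grid sx (by simp [hsx]) (by simp [hsx]) memx
  obtain ⟨m', u, hu0, hum, humono, hustrict, husurj⟩ :=
    exists_grid sy (by simp [hsy]) (by simp [hsy]) memy
  have hxmem : ∀ i, x i ∈ sx := by intro i; simp [hsx]
  have hxwmem : ∀ i, x i + w i ∈ sx := by intro i; simp [hsx]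
  have hymem : ∀ i, y i ∈ sy := by intro i; simp [hsy]
  have hyhmem : ∀ i, y i + h i ∈ sy := by intro i; simp [hsy]
  -- reflecting inequalities
  have htrefl : ∀ a b, a ≤ m → t a < t b → a < b := by
    intro a b ha hab
    by_contra hba
    push_neg at hba
    exact absurd (htmono hba) (not_le.2 hab)
  have hurefl : ∀ a b, a ≤ m' → u a < u b → a < b := by
    intro a b ha hab
    by_contra hba
    push_neg at hba
    exact absurd (humono hba) (not_le.2 hab)
  set A : Fin n → Finset ℕ :=
    fun i => (Finset.range m).filter (fun k => x i ≤ t k ∧ t (k+1) ≤ x i + w i) with hA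
  set B : Fin n → Finset ℕ :=
    fun i => (Finset.range m').filter (fun l => y i ≤ u l ∧ u (l+1) ≤ y i + h i) with hB
  have hfw : ∀ i, f (w i) = ∑ k ∈ A i, f (t (k+1) - t k) := by
    intro i
    obtain ⟨a, ham, hta⟩ := htsurj (x i) (hxmem i)
    obtain ⟨b, hbm, htb⟩ := htsurj (x i + w i) (hxwmem i)
    have hab : a < b := by
      apply htrefl a b ham
      rw [hta, htb]; linarith [hw i]
    have hAi : A i = Finset.Ico a b := by
      ext k
      simp only [hA, Finset.mem_filter, Finset.mem_range, Finset.mem_Ico]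
      constructor
      · rintro ⟨hkm, h1, h2⟩
        constructor
        · by_contra hka
          push_neg at hka
          have : t k < t a := htstrict _ _ hka ham
          rw [hta] at this; linarith
        · by_contra hbk
          push_neg at hbk
          have h3 : t b ≤ t k := htmono hbk
          have h4 : t k < t (k+1) := htstrict _ _ (Nat.lt_succ_self k) (by omega)
          rw [htb] at h3; linarith
      · rintro ⟨hak, hkb⟩
        refine ⟨by omega, ?_, ?_⟩
        · rw [← hta]; exact htmono hak
        · rw [← htb]; exact htmono (by omega)
    rw [hAi, tele hf t (le_of_lt hab), hta, htb]
    rw [← f_sub hf]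
    ring_nf
  have hfh : ∀ i, f (h i) = ∑ l ∈ B i, f (u (l+1) - u l) := by
    intro i
    obtain ⟨a, ham, hta⟩ := husurj (y i) (hymem i)
    obtain ⟨b, hbm, htb⟩ := husurj (y i + h i) (hyhmem i)
    have hab : a < b := by
      apply hurefl a b ham
      rw [hta, htb]; linarith [hh i]
    have hBi : B i = Finset.Ico a b := by
      ext l
      simp only [hB, Finset.mem_filter, Finset.mem_range, Finset.mem_Ico]
      constructor
      · rintro ⟨hkm, h1, h2⟩
        constructor
        · by_contra hka
          push_neg at hka
          have : u l < u a := hustrict _ _ hka ham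
          rw [hta] at this; linarith
        · by_contra hbk
          push_neg at hbk
          have h3 : u b ≤ u l := humono hbk
          have h4 : u l < u (l+1) := hustrict _ _ (Nat.lt_succ_self l) (by omega)
          rw [htb] at h3; linarith
      · rintro ⟨hak, hkb⟩
        refine ⟨by omega, ?_, ?_⟩
        · rw [← hta]; exact humono hak
        · rw [← htb]; exact humono (by omega)
    rw [hBi, tele hf u (le_of_lt hab), hta, htb]
    rw [← f_sub hf]
    ring_nf
  -- uniqueness of the tile containing a cell
  have huniq : ∀ (i j : Fin n) (k l : ℕ), k < m → l < m' →
      (k ∈ A i ∧ l ∈ B i) → (k ∈ A j ∧ l ∈ B j) → i = j := by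
    intro i j k l hkm hlm ⟨hki, hli⟩ ⟨hkj, hlj⟩
    by_contra hij
    simp only [hA, Finset.mem_filter, Finset.mem_range] at hki hkj
    simp only [hB, Finset.mem_filter, Finset.mem_range] at hli hlj
    have htk : t k < t (k+1) := htstrict _ _ (Nat.lt_succ_self k) (by omega)
    have hul : u l < u (l+1) := hustrict _ _ (Nat.lt_succ_self l) (by omega)
    set px := (t k + t (k+1)) / 2
    set py := (u l + u (l+1)) / 2
    have hpi : (px, py) ∈ Ioo (x i) (x i + w i) ×ˢ Ioo (y i) (y i + h i) := by
      constructor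
      · constructor
        · simp only [px]; linarith [hki.2.1, hki.2.2]
        · simp only [px]; linarith [hki.2.1, hki.2.2]
      · constructor
        · simp only [py]; linarith [hli.2.1, hli.2.2]
        · simp only [py]; linarith [hli.2.1, hli.2.2]
    have hpj : (px, py) ∈ Ioo (x j) (x j + w j) ×ˢ Ioo (y j) (y j + h j) := by
      constructor
      · constructor
        · simp only [px]; linarith [hkj.2.1, hkj.2.2]
        · simp only [px]; linarith [hkj.2.1, hkj.2.2]
      · constructor
        · simp only [py]; linarith [hlj.2.1, hlj.2.2]
        · simp only [py]; linarith [hlj.2.1, hlj.2.2]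
    exact Set.disjoint_left.mp (hdisj i j hij) hpi hpj
  -- existence of a tile containing a cell
  have hexist : ∀ k l : ℕ, k < m → l < m' → ∃ i, k ∈ A i ∧ l ∈ B i := by
    intro k l hkm hlm
    have htk : t k < t (k+1) := htstrict _ _ (Nat.lt_succ_self k) (by omega)
    have hul : u l < u (l+1) := hustrict _ _ (Nat.lt_succ_self l) (by omega)
    set px := (t k + t (k+1)) / 2 with hpx
    set py := (u l + u (l+1)) / 2 with hpy
    have hp : ((px, py) : ℝ × ℝ) ∈ Icc (0:ℝ) 1 ×ˢ Icc (0:ℝ) 1 := by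
      have h1 : (0:ℝ) ≤ t k := by rw [← ht0]; exact htmono (Nat.zero_le k)
      have h2 : t (k+1) ≤ 1 := by rw [← htm]; exact htmono (by omega)
      have h3 : (0:ℝ) ≤ u l := by rw [← hu0]; exact humono (Nat.zero_le l)
      have h4 : u (l+1) ≤ 1 := by rw [← hum]; exact humono (by omega)
      constructor
      · constructor <;> (simp only [hpx]; linarith)
      · constructor <;> (simp only [hpy]; linarith)
    rw [← hcover] at hp
    obtain ⟨i, hi⟩ := mem_iUnion.1 hp
    obtain ⟨⟨hix1, hix2⟩, ⟨hiy1, hiy2⟩⟩ := hi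
    refine ⟨i, ?_, ?_⟩
    · obtain ⟨a, ham, hta⟩ := htsurj (x i) (hxmem i)
      obtain ⟨b, hbm, htb⟩ := htsurj (x i + w i) (hxwmem i)
      simp only [hA, Finset.mem_filter, Finset.mem_range]
      refine ⟨hkm, ?_, ?_⟩
      · rw [← hta]
        by_contra hc
        push_neg at hc
        have hka : k < a := htrefl k a (by omega) hc
        have : t (k+1) ≤ t a := htmono hka
        rw [hta] at this
        simp only [hpx] at hix1
        linarith
      · rw [← htb]
        by_contra hc
        push_neg at hc
        have hba : b < k + 1 := htrefl b (k+1) hbm hc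
        have : t b ≤ t k := htmono (by omega)
        rw [htb] at this
        simp only [hpx] at hix2
        linarith
    · obtain ⟨a, ham, hta⟩ := husurj (y i) (hymem i)
      obtain ⟨b, hbm, htb⟩ := husurj (y i + h i) (hyhmem i)
      simp only [hB, Finset.mem_filter, Finset.mem_range]
      refine ⟨hlm, ?_, ?_⟩
      · rw [← hta]
        by_contra hc
        push_neg at hc
        have hka : l < a := hurefl l a (by omega) hc
        have : u (l+1) ≤ u a := humono hka
        rw [hta] at this
        simp only [hpy] at hiy1
        linarith
      · rw [← htb]
        by_contra hc
        push_neg at hc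
        have hba : b < l + 1 := hurefl b (l+1) hbm hc
        have : u b ≤ u l := humono (by omega)
        rw [htb] at this
        simp only [hpy] at hiy2
        linarith
  -- partition of the grid cells
  have hAk : ∀ i k, k ∈ A i → k < m := by
    intro i k hk
    simp only [hA, Finset.mem_filter, Finset.mem_range] at hk
    exact hk.1
  have hBl : ∀ i l, l ∈ B i → l < m' := by
    intro i l hl
    simp only [hB, Finset.mem_filter, Finset.mem_range] at hl
    exact hl.1
  set g : ℕ × ℕ → ℝ := fun p => f (t (p.1+1) - t p.1) * f (u (p.2+1) - u p.2) with hg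
  have hpart : (Finset.univ : Finset (Fin n)).biUnion (fun i => A i ×ˢ B i)
      = Finset.range m ×ˢ Finset.range m' := by
    ext ⟨k, l⟩
    simp only [Finset.mem_biUnion, Finset.mem_product, Finset.mem_univ, true_and,
      Finset.mem_range]
    constructor
    · rintro ⟨i, hki, hli⟩
      exact ⟨hAk i k hki, hBl i l hli⟩
    · rintro ⟨hkm, hlm⟩
      obtain ⟨i, hki, hli⟩ := hexist k l hkm hlm
      exact ⟨i, hki, hli⟩
  have hdisjAB : Set.PairwiseDisjoint (↑(Finset.univ : Finset (Fin n)))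
      (fun i => A i ×ˢ B i) := by
    intro i _ j _ hij
    simp only [Function.onFun]
    rw [Finset.disjoint_left]
    rintro ⟨k, l⟩ hpi hpj
    rw [Finset.mem_product] at hpi hpj
    exact hij (huniq i j k l (hAk i k hpi.1) (hBl i l hpi.2) ⟨hpi.1, hpi.2⟩ ⟨hpj.1, hpj.2⟩)
  calc ∑ i, f (w i) * f (h i)
      = ∑ i, ∑ p ∈ A i ×ˢ B i, g p := by
        apply Finset.sum_congr rfl
        intro i _
        rw [hfw i, hfh i, Finset.sum_mul_sum]
        rw [Finset.sum_product]
    _ = ∑ p ∈ (Finset.univ : Finset (Fin n)).biUnion (fun i => A i ×ˢ B i), g p := by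
        rw [Finset.sum_biUnion hdisjAB]
    _ = ∑ p ∈ Finset.range m ×ˢ Finset.range m', g p := by rw [hpart]
    _ = (∑ k ∈ Finset.range m, f (t (k+1) - t k)) * (∑ l ∈ Finset.range m', f (u (l+1) - u l)) := by
        rw [Finset.sum_mul_sum, Finset.sum_product]
    _ = f 1 * f 1 := by
        rw [Finset.range_eq_Ico, Finset.range_eq_Ico,
          tele hf t (Nat.zero_le m), tele hf u (Nat.zero_le m'),
          ht0, htm, hu0, hum, f_zero hf]
        ring

private lemma exists_semilinear (K : Type) [Field K] (φ ψ : K →+* ℝ) :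
    ∃ f : ℝ → ℝ, (∀ a b, f (a + b) = f a + f b) ∧ f 1 = 1 ∧
      ∀ c v, f (φ c * v) = ψ c * f v := by
  letI : Module K ℝ := Module.compHom ℝ φ
  have hsmul : ∀ (c : K) (v : ℝ), c • v = φ c * v := fun c v => rfl
  haveI : NoZeroSMulDivisors K ℝ := ⟨fun {c v} hcv => by
    rw [hsmul] at hcv
    rcases mul_eq_zero.1 hcv with hc | hv
    · exact Or.inl (φ.injective (by rw [hc, map_zero]))
    · exact Or.inr hv⟩
  have hli : LinearIndepOn K id ({(1:ℝ)} : Set ℝ) :=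
    LinearIndepOn.singleton' (fun r hr => by
      rw [hsmul] at hr
      exact φ.injective (by rw [map_zero]; simpa using hr))
  have h1mem : (1:ℝ) ∈ hli.extend (Set.subset_univ _) := hli.subset_extend _ rfl
  set b := Module.Basis.extend hli with hb
  refine ⟨fun v => ψ (b.repr v ⟨1, h1mem⟩), fun a c => ?_, ?_, fun c v => ?_⟩
  · dsimp only
    rw [map_add, Finsupp.add_apply, map_add]
  · dsimp only
    have h4 : b (⟨1, h1mem⟩ : hli.extend (Set.subset_univ _)) = 1 :=
      Module.Basis.extend_apply_self hli _
    have h3 := b.repr_self (⟨1, h1mem⟩ : hli.extend (Set.subset_univ _))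
    rw [h4] at h3
    rw [h3, Finsupp.single_eq_same, map_one]
  · dsimp only
    rw [← hsmul, map_smul, Finsupp.smul_apply, smul_eq_mul, map_mul]

/-- If the unit square is partitioned into finitely many axis-parallel
rectangles each of side ratio (horizontal/vertical) `R` or `1/R`, where `R > 0`,
then `R` is a root of a nonzero polynomial with integer coefficients. -/
theorem ratio_algebraic_of_square_partition (R : ℝ) (hR : 0 < R)
    (n : ℕ) (x y w h : Fin n → ℝ) (hw : ∀ i, 0 < w i) (hh : ∀ i, 0 < h i)
    (hratio : ∀ i, w i / h i = R ∨ w i / h i = 1 / R)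
    (hcover : (⋃ i, Icc (x i) (x i + w i) ×ˢ Icc (y i) (y i + h i))
      = Icc (0:ℝ) 1 ×ˢ Icc (0:ℝ) 1)
    (hdisj : ∀ i j, i ≠ j →
      Disjoint (Ioo (x i) (x i + w i) ×ˢ Ioo (y i) (y i + h i))
               (Ioo (x j) (x j + w j) ×ˢ Ioo (y j) (y j + h j))) :
    ∃ P : ℤ[X], P ≠ 0 ∧ aeval R P = 0 := by
  by_contra hcon
  have htR : Transcendental ℚ R := by
    intro hal
    have : IsAlgebraic ℤ R := (IsFractionRing.isAlgebraic_iff ℤ ℚ ℝ).mpr hal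
    obtain ⟨P, hP0, hPev⟩ := this
    exact hcon ⟨P, hP0, hPev⟩
  have htR' : Transcendental ℚ (-R) := by
    intro hal
    obtain ⟨p, hp0, hpev⟩ := hal
    apply htR
    refine ⟨p.comp (-X), ?_, ?_⟩
    · intro hc
      apply hp0
      have hcc : (p.comp (-X)).comp (-X) = p := by
        rw [Polynomial.comp_assoc]
        simp
      rw [← hcc, hc, Polynomial.zero_comp]
    · rw [Polynomial.aeval_comp]
      simpa using hpev
  have hinj1 : Function.Injective (Polynomial.aeval R : ℚ[X] →ₐ[ℚ] ℝ) :=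
    transcendental_iff_injective.mp htR
  have hinj2 : Function.Injective (Polynomial.aeval (-R) : ℚ[X] →ₐ[ℚ] ℝ) :=
    transcendental_iff_injective.mp htR'
  obtain ⟨f, hfadd, hf1, hfsem⟩ := exists_semilinear (RatFunc ℚ)
    (IsFractionRing.lift (K := RatFunc ℚ) (g := ((Polynomial.aeval R : ℚ[X] →ₐ[ℚ] ℝ) : ℚ[X] →+* ℝ)) hinj1)
    (IsFractionRing.lift (K := RatFunc ℚ) (g := ((Polynomial.aeval (-R) : ℚ[X] →ₐ[ℚ] ℝ) : ℚ[X] →+* ℝ)) hinj2)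
  have hφX : (IsFractionRing.lift (K := RatFunc ℚ)
      (g := ((Polynomial.aeval R : ℚ[X] →ₐ[ℚ] ℝ) : ℚ[X] →+* ℝ)) hinj1) RatFunc.X = R := by
    rw [← RatFunc.algebraMap_X]
    exact (IsFractionRing.lift_algebraMap _ _).trans (by simp)
  have hψX : (IsFractionRing.lift (K := RatFunc ℚ)
      (g := ((Polynomial.aeval (-R) : ℚ[X] →ₐ[ℚ] ℝ) : ℚ[X] →+* ℝ)) hinj2) RatFunc.X = -R := by
    rw [← RatFunc.algebraMap_X]
    exact (IsFractionRing.lift_algebraMap _ _).trans (by simp)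
  have key : ∀ v : ℝ, f (R * v) = -R * f v := by
    intro v
    have hs := hfsem RatFunc.X v
    rw [hφX, hψX] at hs
    exact hs
  have hsum := grid_sum x y w h hw hh hcover hdisj f hfadd
  rw [hf1] at hsum
  have hterm : ∀ i, f (w i) * f (h i) ≤ 0 := by
    intro i
    rcases hratio i with hr | hr
    · have hwi : w i = R * h i := (div_eq_iff (ne_of_gt (hh i))).mp hr
      rw [hwi, key]
      nlinarith [sq_nonneg (f (h i))]
    · have hhi : h i = R * w i := by
        have := (div_eq_div_iff (ne_of_gt (hh i)) (ne_of_gt hR)).mp hr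
        linarith
      rw [hhi, key]
      nlinarith [sq_nonneg (f (w i))]
  have hle : (∑ i, f (w i) * f (h i)) ≤ 0 := Finset.sum_nonpos (fun i _ => hterm i)
  rw [hsum] at hle
  norm_num at hle
end

section
/- A square cannot be partitioned into finitely many rectangles each having side ratio 1+√2 or 1/(1+√2). -/
open Set Polynomial IntermediateField

set_option maxHeartbeats 1000000
set_option synthInstance.maxHeartbeats 400000

noncomputable section SqrtTwoPartition

lemma sq2_int : IsIntegral ℚ (Real.sqrt 2) := by
  refine ⟨X ^ 2 - C 2, ?_, ?_⟩
  · exact Polynomial.monic_X_pow_sub_C _ (by norm_num)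
  · simp [Real.sq_sqrt]

lemma minpoly_sq2 : minpoly ℚ (Real.sqrt 2) = X ^ 2 - C 2 := by
  symm
  apply minpoly.eq_of_irreducible_of_monic
  · apply X_pow_sub_C_irreducible_of_prime Nat.prime_two
    intro b hb
    have hb' : (b : ℝ) ^ 2 = 2 := by exact_mod_cast congrArg (Rat.cast : ℚ → ℝ) hb
    have : Real.sqrt 2 = |(b : ℝ)| := by
      rw [← Real.sqrt_sq_eq_abs, hb']
    exact irrational_sqrt_two (this ▸ ⟨|b|, by push_cast; rfl⟩)
  · simp [Real.sq_sqrt]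
  · exact Polynomial.monic_X_pow_sub_C _ (by norm_num)

abbrev F2 : IntermediateField ℚ ℝ := ℚ⟮Real.sqrt 2⟯

def conj2 : F2 →ₐ[ℚ] ℝ :=
  (adjoin.powerBasis sq2_int).lift (-Real.sqrt 2)
    (by rw [adjoin.powerBasis_gen, minpoly_gen, minpoly_sq2]; simp [Real.sq_sqrt])

lemma conj2_gen : conj2 (AdjoinSimple.gen ℚ (Real.sqrt 2)) = -Real.sqrt 2 := by
  have := (adjoin.powerBasis sq2_int).lift_gen (-Real.sqrt 2)
    (by rw [adjoin.powerBasis_gen, minpoly_gen, minpoly_sq2]; simp [Real.sq_sqrt])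
  exact this

lemma li_one : LinearIndepOn F2 id ({1} : Set ℝ) :=
  LinearIndepOn.singleton one_ne_zero

def bR : Module.Basis (li_one.extend (Set.subset_univ _)) F2 ℝ := Module.Basis.extend li_one

def fconj (v : ℝ) : ℝ := (bR.repr v).sum fun i c => conj2 c * (i : ℝ)

lemma fconj_add (a b : ℝ) : fconj (a + b) = fconj a + fconj b := by
  unfold fconj
  rw [map_add]
  exact Finsupp.sum_add_index' (by simp) (fun i b c => by rw [map_add, add_mul])

lemma fconj_smul (α : F2) (v : ℝ) : fconj (α • v) = conj2 α * fconj v := by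
  unfold fconj
  rw [map_smul, Finsupp.sum_smul_index' (by simp), Finsupp.mul_sum]
  exact Finsupp.sum_congr fun i _ => by rw [smul_eq_mul, map_mul, mul_assoc]

lemma fconj_one : fconj 1 = 1 := by
  have h1 : (1:ℝ) ∈ li_one.extend (Set.subset_univ _) :=
    li_one.subset_extend _ rfl
  have hb1 : bR ⟨1, h1⟩ = 1 := Module.Basis.extend_apply_self li_one ⟨1, h1⟩
  rw [← hb1]
  unfold fconj
  rw [Module.Basis.repr_self, Finsupp.sum_single_index (by simp)]
  simp [hb1]

lemma fconj_zero : fconj 0 = 0 := by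
  have := fconj_add 0 0
  simp only [add_zero] at this
  linarith

lemma fconj_sqrt2 (t : ℝ) : fconj (Real.sqrt 2 * t) = -Real.sqrt 2 * fconj t := by
  have hs : Real.sqrt 2 * t = (AdjoinSimple.gen ℚ (Real.sqrt 2)) • t := by
    rw [Algebra.smul_def, AdjoinSimple.algebraMap_gen]
  rw [hs, fconj_smul, conj2_gen]

lemma one_le_sqrt2 : (1:ℝ) ≤ Real.sqrt 2 := by
  nlinarith [Real.sq_sqrt (show (0:ℝ) ≤ 2 by norm_num), Real.sqrt_nonneg 2]

lemma fconj_ratio (t : ℝ) : fconj ((1 + Real.sqrt 2) * t) = (1 - Real.sqrt 2) * fconj t := by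
  rw [add_mul, one_mul, fconj_add, fconj_sqrt2]; ring

lemma exists_grid_s17 (S : Finset ℝ) (h0 : (0:ℝ) ∈ S) (h1 : (1:ℝ) ∈ S)
    (hS : ∀ t ∈ S, t ∈ Icc (0:ℝ) 1) :
    ∃ (M : ℕ) (X : ℕ → ℝ), X 0 = 0 ∧ X M = 1 ∧
      (∀ p q, p ≤ M → q ≤ M → (X p < X q ↔ p < q)) ∧
      (∀ t ∈ S, ∃ p, p ≤ M ∧ X p = t) := by
  have hcard : 1 ≤ S.card := Finset.card_pos.2 ⟨0, h0⟩
  set N := S.card with hN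
  let e := S.orderIsoOfFin rfl
  have hlt : ∀ (a b : Fin N), ((e a : ℝ) < (e b : ℝ) ↔ a < b) := by
    intro a b
    rw [show ((e a : ℝ) < (e b : ℝ)) ↔ (e a < e b) from Iff.rfl, e.lt_iff_lt]
  refine ⟨N - 1, fun p => if h : p < N then (e ⟨p, h⟩ : ℝ) else 1, ?_, ?_, ?_, ?_⟩
  · beta_reduce; rw [dif_pos (by omega : 0 < N)]
    obtain ⟨k, hk⟩ := e.surjective ⟨0, h0⟩
    have hle : e ⟨0, by omega⟩ ≤ e k := e.monotone (by simp [Fin.le_def])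
    have h2 : (e ⟨0, by omega⟩ : ℝ) ≤ 0 := by rw [hk] at hle; exact_mod_cast hle
    have h3 : (0:ℝ) ≤ (e ⟨0, by omega⟩ : ℝ) := (hS _ (e ⟨0, by omega⟩).2).1
    linarith
  · beta_reduce; rw [dif_pos (by omega : N - 1 < N)]
    obtain ⟨k, hk⟩ := e.surjective ⟨1, h1⟩
    have hle : e k ≤ e ⟨N - 1, by omega⟩ := e.monotone (by simp [Fin.le_def]; omega)
    have h2 : (1:ℝ) ≤ (e ⟨N - 1, by omega⟩ : ℝ) := by rw [hk] at hle; exact_mod_cast hle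
    have h3 : (e ⟨N - 1, by omega⟩ : ℝ) ≤ 1 := (hS _ (e ⟨N - 1, by omega⟩).2).2
    linarith
  · intro p q hp hq
    beta_reduce; rw [dif_pos (by omega : p < N), dif_pos (by omega : q < N), hlt]
    simp [Fin.lt_def]
  · intro t ht
    obtain ⟨k, hk⟩ := e.surjective ⟨t, ht⟩
    refine ⟨k.1, by omega, ?_⟩
    beta_reduce; rw [dif_pos k.2, Fin.eta, hk]

end SqrtTwoPartition

open Set

/-- A square cannot be partitioned into finitely many axis-parallel rectangles
each having side ratio `1+√2` or `1/(1+√2)`. -/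
theorem no_square_partition_ratio_one_add_sqrt_two :
    ¬ ∃ (n : ℕ) (x y w h : Fin n → ℝ),
      (∀ i, 0 < w i) ∧ (∀ i, 0 < h i) ∧
      (∀ i, w i / h i = (1 + Real.sqrt 2) ∨ w i / h i = 1 / (1 + Real.sqrt 2)) ∧
      (⋃ i, Icc (x i) (x i + w i) ×ˢ Icc (y i) (y i + h i))
        = Icc (0:ℝ) 1 ×ˢ Icc (0:ℝ) 1 ∧
      (∀ i j, i ≠ j →
        Disjoint (Ioo (x i) (x i + w i) ×ˢ Ioo (y i) (y i + h i))
                 (Ioo (x j) (x j + w j) ×ˢ Ioo (y j) (y j + h j))) := by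
  rintro ⟨n, x, y, w, h, hw, hh, hr, hcov, hdisj⟩
  classical
  -- every point of every rectangle lies in the unit square
  have hmem : ∀ (i : Fin n) (a b : ℝ), x i ≤ a → a ≤ x i + w i → y i ≤ b → b ≤ y i + h i →
      (0 ≤ a ∧ a ≤ 1) ∧ (0 ≤ b ∧ b ≤ 1) := by
    intro i a b h1 h2 h3 h4
    have hm : ((a, b) : ℝ × ℝ) ∈ (⋃ i, Icc (x i) (x i + w i) ×ˢ Icc (y i) (y i + h i)) :=
      Set.mem_iUnion.2 ⟨i, ⟨⟨h1, h2⟩, ⟨h3, h4⟩⟩⟩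
    rw [hcov] at hm
    exact ⟨hm.1, hm.2⟩
  have hb : ∀ i : Fin n, 0 ≤ x i ∧ x i + w i ≤ 1 ∧ 0 ≤ y i ∧ y i + h i ≤ 1 := by
    intro i
    have h1 := hmem i (x i) (y i) le_rfl (by linarith [hw i]) le_rfl (by linarith [hh i])
    have h2 := hmem i (x i + w i) (y i + h i) (by linarith [hw i]) le_rfl
      (by linarith [hh i]) le_rfl
    exact ⟨h1.1.1, h2.1.2, h1.2.1, h2.2.2⟩
  -- the grids
  set Sx : Finset ℝ := ({0, 1} : Finset ℝ) ∪ Finset.image x Finset.univ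
      ∪ Finset.image (fun i => x i + w i) Finset.univ with hSxdef
  set Sy : Finset ℝ := ({0, 1} : Finset ℝ) ∪ Finset.image y Finset.univ
      ∪ Finset.image (fun i => y i + h i) Finset.univ with hSydef
  have hxmem : ∀ i, x i ∈ Sx := by intro i; simp [hSxdef]
  have hxwmem : ∀ i, x i + w i ∈ Sx := by intro i; simp [hSxdef]
  have hymem : ∀ i, y i ∈ Sy := by intro i; simp [hSydef]
  have hyhmem : ∀ i, y i + h i ∈ Sy := by intro i; simp [hSydef]
  have hSx0 : (0:ℝ) ∈ Sx := by simp [hSxdef]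
  have hSx1 : (1:ℝ) ∈ Sx := by simp [hSxdef]
  have hSy0 : (0:ℝ) ∈ Sy := by simp [hSydef]
  have hSy1 : (1:ℝ) ∈ Sy := by simp [hSydef]
  have hSxIcc : ∀ t ∈ Sx, t ∈ Icc (0:ℝ) 1 := by
    intro t ht
    simp only [hSxdef, Finset.mem_union, Finset.mem_insert, Finset.mem_singleton,
      Finset.mem_image, Finset.mem_univ, true_and] at ht
    rcases ht with (h01 | ⟨i, rfl⟩) | ⟨i, rfl⟩
    · rcases h01 with rfl | rfl
      · exact ⟨le_rfl, by norm_num⟩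
      · exact ⟨by norm_num, le_rfl⟩
    · exact ⟨(hb i).1, by linarith [hw i, (hb i).2.1]⟩
    · exact ⟨by linarith [hw i, (hb i).1], (hb i).2.1⟩
  have hSyIcc : ∀ t ∈ Sy, t ∈ Icc (0:ℝ) 1 := by
    intro t ht
    simp only [hSydef, Finset.mem_union, Finset.mem_insert, Finset.mem_singleton,
      Finset.mem_image, Finset.mem_univ, true_and] at ht
    rcases ht with (h01 | ⟨i, rfl⟩) | ⟨i, rfl⟩
    · rcases h01 with rfl | rfl
      · exact ⟨le_rfl, by norm_num⟩
      · exact ⟨by norm_num, le_rfl⟩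
    · exact ⟨(hb i).2.2.1, by linarith [hh i, (hb i).2.2.2]⟩
    · exact ⟨by linarith [hh i, (hb i).2.2.1], (hb i).2.2.2⟩
  obtain ⟨Mx, X, hX0, hXM, hXlt, hXmem⟩ := exists_grid_s17 Sx hSx0 hSx1 hSxIcc
  obtain ⟨My, Y, hY0, hYM, hYlt, hYmem⟩ := exists_grid_s17 Sy hSy0 hSy1 hSyIcc
  have hXle : ∀ p q, p ≤ Mx → q ≤ Mx → (X p ≤ X q ↔ p ≤ q) := by
    intro p q hp hq
    rw [← not_lt, ← not_lt, not_iff_not, hXlt q p hq hp]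
  have hYle : ∀ p q, p ≤ My → q ≤ My → (Y p ≤ Y q ↔ p ≤ q) := by
    intro p q hp hq
    rw [← not_lt, ← not_lt, not_iff_not, hYlt q p hq hp]
  set dX : ℕ → ℝ := fun p => fconj (X (p + 1)) - fconj (X p) with hdX
  set dY : ℕ → ℝ := fun p => fconj (Y (p + 1)) - fconj (Y p) with hdY
  have hsumX : ∑ p ∈ Finset.range Mx, dX p = 1 := by
    rw [hdX, Finset.sum_range_sub (fun p => fconj (X p)) Mx, hX0, hXM, fconj_one, fconj_zero,
      sub_zero]
  have hsumY : ∑ p ∈ Finset.range My, dY p = 1 := by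
    rw [hdY, Finset.sum_range_sub (fun p => fconj (Y p)) My, hY0, hYM, fconj_one, fconj_zero,
      sub_zero]
  -- per-rectangle column and row sums
  have hcol : ∀ i : Fin n,
      ∑ p ∈ (Finset.range Mx).filter (fun p => x i ≤ X p ∧ X (p+1) ≤ x i + w i), dX p
        = fconj (w i) := by
    intro i
    obtain ⟨a, ha, hXa⟩ := hXmem (x i) (hxmem i)
    obtain ⟨b, hbM, hXb⟩ := hXmem (x i + w i) (hxwmem i)
    have hab : a < b := by
      rw [← hXlt a b ha hbM, hXa, hXb]; linarith [hw i]
    have hfilter : (Finset.range Mx).filter (fun p => x i ≤ X p ∧ X (p+1) ≤ x i + w i)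
        = Finset.Ico a b := by
      ext p
      simp only [Finset.mem_filter, Finset.mem_range, Finset.mem_Ico]
      constructor
      · rintro ⟨hpM, hxp, hpw⟩
        have h1 : X a ≤ X p := by rw [hXa]; exact hxp
        have h2 : X (p+1) ≤ X b := by rw [hXb]; exact hpw
        have ha' : a ≤ p := (hXle a p ha (by omega)).1 h1
        have hb' : p + 1 ≤ b := (hXle (p+1) b (by omega) hbM).1 h2
        omega
      · rintro ⟨hap, hpb⟩
        have hpM : p < Mx := by omega
        refine ⟨hpM, ?_, ?_⟩
        · have : X a ≤ X p := (hXle a p ha (by omega)).2 hap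
          rwa [hXa] at this
        · have : X (p+1) ≤ X b := (hXle (p+1) b (by omega) hbM).2 (by omega)
          rwa [hXb] at this
    rw [hfilter, hdX]
    rw [Finset.sum_Ico_eq_sub _ (le_of_lt hab),
      Finset.sum_range_sub (fun p => fconj (X p)) b,
      Finset.sum_range_sub (fun p => fconj (X p)) a, hXa, hXb]
    have := fconj_add (x i) (w i)
    linarith
  have hrow : ∀ i : Fin n,
      ∑ q ∈ (Finset.range My).filter (fun q => y i ≤ Y q ∧ Y (q+1) ≤ y i + h i), dY q
        = fconj (h i) := by
    intro i
    obtain ⟨a, ha, hYa⟩ := hYmem (y i) (hymem i)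
    obtain ⟨b, hbM, hYb⟩ := hYmem (y i + h i) (hyhmem i)
    have hab : a < b := by
      rw [← hYlt a b ha hbM, hYa, hYb]; linarith [hh i]
    have hfilter : (Finset.range My).filter (fun q => y i ≤ Y q ∧ Y (q+1) ≤ y i + h i)
        = Finset.Ico a b := by
      ext p
      simp only [Finset.mem_filter, Finset.mem_range, Finset.mem_Ico]
      constructor
      · rintro ⟨hpM, hxp, hpw⟩
        have h1 : Y a ≤ Y p := by rw [hYa]; exact hxp
        have h2 : Y (p+1) ≤ Y b := by rw [hYb]; exact hpw
        have ha' : a ≤ p := (hYle a p ha (by omega)).1 h1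
        have hb' : p + 1 ≤ b := (hYle (p+1) b (by omega) hbM).1 h2
        omega
      · rintro ⟨hap, hpb⟩
        have hpM : p < My := by omega
        refine ⟨hpM, ?_, ?_⟩
        · have : Y a ≤ Y p := (hYle a p ha (by omega)).2 hap
          rwa [hYa] at this
        · have : Y (p+1) ≤ Y b := (hYle (p+1) b (by omega) hbM).2 (by omega)
          rwa [hYb] at this
    rw [hfilter, hdY]
    rw [Finset.sum_Ico_eq_sub _ (le_of_lt hab),
      Finset.sum_range_sub (fun p => fconj (Y p)) b,
      Finset.sum_range_sub (fun p => fconj (Y p)) a, hYa, hYb]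
    have := fconj_add (y i) (h i)
    linarith
  -- each cell lies in exactly one rectangle
  have huniq : ∀ p, p < Mx → ∀ q, q < My → ∃! i : Fin n,
      (x i ≤ X p ∧ X (p+1) ≤ x i + w i) ∧ (y i ≤ Y q ∧ Y (q+1) ≤ y i + h i) := by
    intro p hp q hq
    set u := (X p + X (p+1))/2 with hu
    set v := (Y q + Y (q+1))/2 with hv
    have hpx : X p < X (p+1) := (hXlt p (p+1) (by omega) (by omega)).2 (by omega)
    have hqy : Y q < Y (q+1) := (hYlt q (q+1) (by omega) (by omega)).2 (by omega)
    have hu1 : X p < u := by rw [hu]; linarith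
    have hu2 : u < X (p+1) := by rw [hu]; linarith
    have hv1 : Y q < v := by rw [hv]; linarith
    have hv2 : v < Y (q+1) := by rw [hv]; linarith
    have h0u : 0 ≤ X p := by
      have := (hXle 0 p (by omega) (by omega)).2 (by omega); rwa [hX0] at this
    have hu1' : X (p+1) ≤ 1 := by
      have := (hXle (p+1) Mx (by omega) le_rfl).2 (by omega); rwa [hXM] at this
    have h0v : 0 ≤ Y q := by
      have := (hYle 0 q (by omega) (by omega)).2 (by omega); rwa [hY0] at this
    have hv1' : Y (q+1) ≤ 1 := by
      have := (hYle (q+1) My (by omega) le_rfl).2 (by omega); rwa [hYM] at this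
    have huv : ((u, v) : ℝ × ℝ) ∈ Icc (0:ℝ) 1 ×ˢ Icc (0:ℝ) 1 :=
      ⟨⟨by linarith, by linarith⟩, ⟨by linarith, by linarith⟩⟩
    rw [← hcov] at huv
    obtain ⟨i, hi⟩ := Set.mem_iUnion.1 huv
    obtain ⟨⟨hi1, hi2⟩, hi3, hi4⟩ := hi
    have key : ∀ j : Fin n, x j ≤ u → u ≤ x j + w j → y j ≤ v → v ≤ y j + h j →
        (x j ≤ X p ∧ X (p+1) ≤ x j + w j) ∧ (y j ≤ Y q ∧ Y (q+1) ≤ y j + h j) := by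
      intro j h1 h2 h3 h4
      obtain ⟨a, ha, hXa⟩ := hXmem (x j) (hxmem j)
      obtain ⟨b, hbM, hXb⟩ := hXmem (x j + w j) (hxwmem j)
      obtain ⟨c, hc, hYc⟩ := hYmem (y j) (hymem j)
      obtain ⟨d, hd, hYd⟩ := hYmem (y j + h j) (hyhmem j)
      have hap : a < p + 1 := (hXlt a (p+1) ha (by omega)).1 (by rw [hXa]; linarith)
      have hxa : X a ≤ X p := (hXle a p ha (by omega)).2 (by omega)
      have hpb : p < b := (hXlt p b (by omega) hbM).1 (by rw [hXb]; linarith)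
      have hxb : X (p+1) ≤ X b := (hXle (p+1) b (by omega) hbM).2 (by omega)
      have hcq : c < q + 1 := (hYlt c (q+1) hc (by omega)).1 (by rw [hYc]; linarith)
      have hyc : Y c ≤ Y q := (hYle c q hc (by omega)).2 (by omega)
      have hqd : q < d := (hYlt q d (by omega) hd).1 (by rw [hYd]; linarith)
      have hyd : Y (q+1) ≤ Y d := (hYle (q+1) d (by omega) hd).2 (by omega)
      rw [hXa] at hxa; rw [hXb] at hxb; rw [hYc] at hyc; rw [hYd] at hyd
      exact ⟨⟨hxa, hxb⟩, ⟨hyc, hyd⟩⟩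
    refine ⟨i, key i hi1 hi2 hi3 hi4, ?_⟩
    intro j hj
    by_contra hne
    have hopenj : ((u, v) : ℝ × ℝ) ∈ Ioo (x j) (x j + w j) ×ˢ Ioo (y j) (y j + h j) :=
      ⟨⟨lt_of_le_of_lt hj.1.1 hu1, lt_of_lt_of_le hu2 hj.1.2⟩,
       ⟨lt_of_le_of_lt hj.2.1 hv1, lt_of_lt_of_le hv2 hj.2.2⟩⟩
    have hki := key i hi1 hi2 hi3 hi4
    have hopeni : ((u, v) : ℝ × ℝ) ∈ Ioo (x i) (x i + w i) ×ˢ Ioo (y i) (y i + h i) :=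
      ⟨⟨lt_of_le_of_lt hki.1.1 hu1, lt_of_lt_of_le hu2 hki.1.2⟩,
       ⟨lt_of_le_of_lt hki.2.1 hv1, lt_of_lt_of_le hv2 hki.2.2⟩⟩
    exact Set.disjoint_left.1 (hdisj j i hne) hopenj hopeni
  -- total of all cells equals 1
  have hcells : ∑ pq ∈ (Finset.range Mx) ×ˢ (Finset.range My), dX pq.1 * dY pq.2 = 1 := by
    rw [Finset.sum_product, ← Finset.sum_mul_sum, hsumX, hsumY, one_mul]
  -- sum over each rectangle's cells
  have hper : ∀ i : Fin n,
      ∑ pq ∈ ((Finset.range Mx) ×ˢ (Finset.range My)).filter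
        (fun pq => (x i ≤ X pq.1 ∧ X (pq.1+1) ≤ x i + w i) ∧
                   (y i ≤ Y pq.2 ∧ Y (pq.2+1) ≤ y i + h i)),
        dX pq.1 * dY pq.2 = fconj (w i) * fconj (h i) := by
    intro i
    have hfp : ((Finset.range Mx) ×ˢ (Finset.range My)).filter
        (fun pq => (x i ≤ X pq.1 ∧ X (pq.1+1) ≤ x i + w i) ∧
                   (y i ≤ Y pq.2 ∧ Y (pq.2+1) ≤ y i + h i))
        = ((Finset.range Mx).filter (fun p => x i ≤ X p ∧ X (p+1) ≤ x i + w i))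
          ×ˢ ((Finset.range My).filter (fun q => y i ≤ Y q ∧ Y (q+1) ≤ y i + h i)) := by
      ext pq
      simp only [Finset.mem_filter, Finset.mem_product]
      tauto
    rw [hfp, Finset.sum_product, ← Finset.sum_mul_sum, hcol i, hrow i]
  -- grand identity
  have htot : ∑ i : Fin n, fconj (w i) * fconj (h i) = 1 := by
    calc ∑ i : Fin n, fconj (w i) * fconj (h i)
        = ∑ i : Fin n, ∑ pq ∈ ((Finset.range Mx) ×ˢ (Finset.range My)).filter
            (fun pq => (x i ≤ X pq.1 ∧ X (pq.1+1) ≤ x i + w i) ∧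
                       (y i ≤ Y pq.2 ∧ Y (pq.2+1) ≤ y i + h i)),
            dX pq.1 * dY pq.2 := by
          exact Finset.sum_congr rfl fun i _ => (hper i).symm
      _ = ∑ i : Fin n, ∑ pq ∈ (Finset.range Mx) ×ˢ (Finset.range My),
            if (x i ≤ X pq.1 ∧ X (pq.1+1) ≤ x i + w i) ∧
               (y i ≤ Y pq.2 ∧ Y (pq.2+1) ≤ y i + h i) then dX pq.1 * dY pq.2 else 0 := by
          exact Finset.sum_congr rfl fun i _ => Finset.sum_filter _ _
      _ = ∑ pq ∈ (Finset.range Mx) ×ˢ (Finset.range My), ∑ i : Fin n,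
            if (x i ≤ X pq.1 ∧ X (pq.1+1) ≤ x i + w i) ∧
               (y i ≤ Y pq.2 ∧ Y (pq.2+1) ≤ y i + h i) then dX pq.1 * dY pq.2 else 0 :=
          Finset.sum_comm
      _ = ∑ pq ∈ (Finset.range Mx) ×ˢ (Finset.range My), dX pq.1 * dY pq.2 := by
          refine Finset.sum_congr rfl fun pq hpq => ?_
          rw [Finset.mem_product, Finset.mem_range, Finset.mem_range] at hpq
          obtain ⟨i0, hi0, hi0u⟩ := huniq pq.1 hpq.1 pq.2 hpq.2
          rw [← Finset.sum_filter]
          have : Finset.univ.filter (fun i : Fin n =>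
              (x i ≤ X pq.1 ∧ X (pq.1+1) ≤ x i + w i) ∧
              (y i ≤ Y pq.2 ∧ Y (pq.2+1) ≤ y i + h i)) = {i0} := by
            apply Finset.eq_singleton_iff_unique_mem.2
            refine ⟨Finset.mem_filter.2 ⟨Finset.mem_univ _, hi0⟩, fun j hj => ?_⟩
            exact hi0u j (Finset.mem_filter.1 hj).2
          rw [this, Finset.sum_singleton]
      _ = 1 := hcells
  -- but each term is nonpositive
  have hneg : ∀ i : Fin n, fconj (w i) * fconj (h i) ≤ 0 := by
    intro i
    have hs2 := one_le_sqrt2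
    rcases hr i with hri | hri
    · have hwi : w i = (1 + Real.sqrt 2) * h i :=
        (div_eq_iff (ne_of_gt (hh i))).1 hri
      rw [hwi, fconj_ratio]
      nlinarith [sq_nonneg (fconj (h i))]
    · have hpos : (0:ℝ) < 1 + Real.sqrt 2 := by linarith
      have hhi : h i = (1 + Real.sqrt 2) * w i := by
        have := (div_eq_div_iff (ne_of_gt (hh i)) (ne_of_gt hpos)).1 hri
        linarith
      rw [hhi, fconj_ratio]
      nlinarith [sq_nonneg (fconj (w i))]
  have : ∑ i : Fin n, fconj (w i) * fconj (h i) ≤ 0 :=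
    Finset.sum_nonpos fun i _ => hneg i
  linarith
end

section
/- If a rectangle is partitioned into finitely many axis-parallel rectangles each of which has at least one side of integer length, then the large rectangle has at least one side of integer length. -/
open Set MeasureTheory intervalIntegral

noncomputable def ee (t : ℝ) : ℂ := Complex.exp (2 * Real.pi * Complex.I * t)

lemma twopiI_ne : (2 * Real.pi * Complex.I : ℂ) ≠ 0 := by
  simp [Real.pi_ne_zero, Complex.I_ne_zero]

lemma ee_cont : Continuous ee := by
  unfold ee; fun_prop

lemma J_eq (s w : ℝ) (hw : 0 ≤ w) :
    ∫ t in Icc s (s + w), ee t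
      = (Complex.exp (2 * Real.pi * Complex.I * (s + w))
          - Complex.exp (2 * Real.pi * Complex.I * s)) / (2 * Real.pi * Complex.I) := by
  rw [MeasureTheory.integral_Icc_eq_integral_Ioc,
    ← intervalIntegral.integral_of_le (by linarith : s ≤ s + w)]
  have := integral_exp_mul_complex (a := s) (b := s + w) twopiI_ne
  simpa [ee] using this

lemma J_zero_iff (s w : ℝ) (hw : 0 ≤ w) :
    (∫ t in Icc s (s + w), ee t) = 0 ↔ ∃ m : ℤ, w = m := by
  rw [J_eq s w hw, div_eq_zero_iff]
  have hcs : Complex.exp (2 * Real.pi * Complex.I * s) ≠ 0 := Complex.exp_ne_zero _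
  constructor
  · rintro (hz | hz)
    · have hsub := sub_eq_zero.mp hz
      rw [mul_add, Complex.exp_add] at hsub
      have h1 : Complex.exp (2 * Real.pi * Complex.I * w) = 1 := by
        field_simp at hsub
        exact hsub
      rw [Complex.exp_eq_one_iff] at h1
      obtain ⟨m, hm⟩ := h1
      refine ⟨m, ?_⟩
      have : (w : ℂ) = m := by
        have h2 : (2 * Real.pi * Complex.I) * w = (2 * Real.pi * Complex.I) * m := by
          rw [hm]; ring
        exact mul_left_cancel₀ twopiI_ne h2
      exact_mod_cast this
    · exact absurd hz twopiI_ne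
  · rintro ⟨m, rfl⟩
    left
    rw [sub_eq_zero, mul_add, Complex.exp_add]
    have : Complex.exp (2 * Real.pi * Complex.I * (m : ℝ)) = 1 := by
      push_cast
      rw [mul_comm]
      exact Complex.exp_int_mul_two_pi_mul_I m
    rw [this, mul_one]

/-- If a rectangle `[0,a] × [0,b]` is partitioned into finitely many
axis-parallel rectangles each of which has at least one side of integer length,
then `a` or `b` is an integer. -/
theorem integer_side_of_partition (a b : ℝ) (ha : 0 < a) (hb : 0 < b)
    (n : ℕ) (x y w h : Fin n → ℝ) (hw : ∀ i, 0 < w i) (hh : ∀ i, 0 < h i)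
    (hint : ∀ i, (∃ m : ℤ, w i = m) ∨ (∃ m : ℤ, h i = m))
    (hcover : (⋃ i, Icc (x i) (x i + w i) ×ˢ Icc (y i) (y i + h i))
      = Icc (0:ℝ) a ×ˢ Icc (0:ℝ) b)
    (hdisj : ∀ i j, i ≠ j →
      Disjoint (Ioo (x i) (x i + w i) ×ˢ Ioo (y i) (y i + h i))
               (Ioo (x j) (x j + w j) ×ˢ Ioo (y j) (y j + h j))) :
    (∃ m : ℤ, a = m) ∨ (∃ m : ℤ, b = m) := by
  by_contra hcon
  push_neg at hcon
  obtain ⟨hA, hB⟩ := hcon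
  set S : Fin n → Set (ℝ × ℝ) :=
    fun i => Icc (x i) (x i + w i) ×ˢ Icc (y i) (y i + h i) with hS
  have hmeas : ∀ i, MeasurableSet (S i) := fun i => measurableSet_Icc.prod measurableSet_Icc
  -- pairwise a.e. disjoint
  have hae : Pairwise (Function.onFun (AEDisjoint volume) S) := by
    intro i j hij
    have hd := hdisj i j hij
    rw [Set.disjoint_iff_inter_eq_empty, Set.prod_inter_prod, Set.prod_eq_empty_iff,
      Set.Ioo_inter_Ioo, Set.Ioo_inter_Ioo] at hd
    have hident : S i ∩ S j
        = (Icc (x i) (x i + w i) ∩ Icc (x j) (x j + w j)) ×ˢ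
          (Icc (y i) (y i + h i) ∩ Icc (y j) (y j + h j)) := by
      simp only [hS]; exact Set.prod_inter_prod
    show volume (S i ∩ S j) = 0
    rw [hident, MeasureTheory.Measure.volume_eq_prod ℝ ℝ, MeasureTheory.Measure.prod_prod,
      Set.Icc_inter_Icc, Set.Icc_inter_Icc, Real.volume_Icc, Real.volume_Icc]
    rcases hd with hd | hd
    · rw [Set.Ioo_eq_empty_iff] at hd
      have : ENNReal.ofReal ((x i + w i) ⊓ (x j + w j) - x i ⊔ x j) = 0 := by
        rw [ENNReal.ofReal_eq_zero]
        have h1 : (x i + w i) ⊓ (x j + w j) ≤ x i ⊔ x j := not_lt.mp hd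
        linarith
      rw [this, zero_mul]
    · rw [Set.Ioo_eq_empty_iff] at hd
      have : ENNReal.ofReal ((y i + h i) ⊓ (y j + h j) - y i ⊔ y j) = 0 := by
        rw [ENNReal.ofReal_eq_zero]
        have h1 : (y i + h i) ⊓ (y j + h j) ≤ y i ⊔ y j := not_lt.mp hd
        linarith
      rw [this, mul_zero]
  -- integrability
  have hU : (⋃ i, S i) = Icc (0:ℝ) a ×ˢ Icc (0:ℝ) b := hcover
  have hfc : Continuous (fun p : ℝ × ℝ => ee p.1 * ee p.2) :=
    (ee_cont.comp continuous_fst).mul (ee_cont.comp continuous_snd)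
  have hfi : IntegrableOn (fun p : ℝ × ℝ => ee p.1 * ee p.2) (⋃ i, S i) := by
    rw [hU]
    exact hfc.continuousOn.integrableOn_compact (isCompact_Icc.prod isCompact_Icc)
  have hsum := MeasureTheory.integral_iUnion_ae (μ := volume)
    (f := fun p : ℝ × ℝ => ee p.1 * ee p.2)
    (fun i => (hmeas i).nullMeasurableSet) hae hfi
  rw [hU, tsum_fintype] at hsum
  -- each term is zero
  have hterm : ∀ i, ∫ p in S i, ee p.1 * ee p.2 = 0 := by
    intro i
    rw [hS, MeasureTheory.Measure.volume_eq_prod ℝ ℝ,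
      MeasureTheory.setIntegral_prod_mul ee ee]
    rcases hint i with ⟨m, hm⟩ | ⟨m, hm⟩
    · rw [(J_zero_iff (x i) (w i) (hw i).le).mpr ⟨m, hm⟩, zero_mul]
    · rw [(J_zero_iff (y i) (h i) (hh i).le).mpr ⟨m, hm⟩, mul_zero]
  simp only [hterm, Finset.sum_const_zero] at hsum
  rw [MeasureTheory.Measure.volume_eq_prod ℝ ℝ, MeasureTheory.setIntegral_prod_mul ee ee] at hsum
  rcases mul_eq_zero.mp hsum with hz | hz
  · obtain ⟨m, hm⟩ := (J_zero_iff 0 a ha.le).mp (by rwa [zero_add])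
    exact hA m hm
  · obtain ⟨m, hm⟩ := (J_zero_iff 0 b hb.le).mp (by rwa [zero_add])
    exact hB m hm
end
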